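/- arXiv:1905.13188 — 7 statements merged into one kernel-verified Lean document; each statement's English description precedes it below -/
import Mathlib

section
/- Step lemma: Let M be a countable metric space, α > 0, K ≥ 1, and let {φ_n} be a commuting system of retractions as in the retractional-basis setup (φ_n(M) = {μ_0,...,μ_n}, φ_m φ_n = φ_n φ_m = φ_n for n ≤ m). Suppose (μ_{i_1}, ..., μ_{i_j}) with j > 1 is a chain (i.e. i_1 < ... < i_j and φ_{i_m − 1}(μ_{i_m}) = μ_{i_{m−1}} for each m ≥ 2), and suppose there exist distinct points x_1, ..., x_k ∈ M with d(x_l, x_{l+1}) ≤ α for all l, x_1 = μ_{i_j}, x_k = μ_{i_1}, and sup_{i_1 ≤ n ≤ i_j} Lip(φ_n) ≤ K. Then d(μ_{i_{m−1}}, μ_{i_m}) ≤ 2Kα for all m ∈ {2, ..., j}. -/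
open scoped NNReal

/-- Step lemma: in a countable metric space with a commuting system of
retractions `φ n` onto `{μ 0, ..., μ n}`, if `(μ (ii 0), ..., μ (ii (j-1)))` is a chain,
and there are distinct points `x 0, ..., x (k-1)` with consecutive distances `≤ α`
joining `μ (ii (j-1))` to `μ (ii 0)`, and all `φ n` with `ii 0 ≤ n ≤ ii (j-1)` are
`K`-Lipschitz (`K ≥ 1`), then consecutive chain points are at distance `≤ 2 K α`. -/
theorem step_lemma {M : Type*} [MetricSpace M] [Countable M] (z : M)
    (α : ℝ) (K : ℝ≥0) (hα : 0 < α) (hK : (1 : ℝ≥0) ≤ K)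
    (μ : ℕ → M) (φ : ℕ → M → M)
    (hμ0 : μ 0 = z) (hμinj : Function.Injective μ)
    (hrange : ∀ n, Set.range (φ n) = μ '' Set.Iic n)
    (hretr : ∀ n k, k ≤ n → φ n (μ k) = μ k)
    (hcomm : ∀ n m, n ≤ m → ∀ y : M, φ m (φ n y) = φ n y ∧ φ n (φ m y) = φ n y)
    -- the chain (μ (ii 0), ..., μ (ii (j-1)))
    (j : ℕ) (hj : 1 < j) (ii : ℕ → ℕ) (hmono : StrictMonoOn ii (Set.Iio j))
    (hchain : ∀ m, 0 < m → m < j → φ (ii m - 1) (μ (ii m)) = μ (ii (m - 1)))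
    -- the connecting points x 1, ..., x k (here indexed 0, ..., k-1)
    (k : ℕ) (hk : 0 < k) (x : ℕ → M) (hxinj : Set.InjOn x (Set.Iio k))
    (hstep : ∀ l, l + 1 < k → dist (x l) (x (l + 1)) ≤ α)
    (hx0 : x 0 = μ (ii (j - 1))) (hxlast : x (k - 1) = μ (ii 0))
    (hlip : ∀ n, ii 0 ≤ n → n ≤ ii (j - 1) → LipschitzWith K (φ n)) :
    ∀ m, 0 < m → m < j → dist (μ (ii (m - 1))) (μ (ii m)) ≤ 2 * (K : ℝ) * α := by
  classical
  -- collapsing lemma: applying φ p with p ≤ ii q to a later chain point gives the same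
  -- as applying it to μ (ii q)
  have down : ∀ q r, q ≤ r → r < j → ∀ p, p ≤ ii q → φ p (μ (ii r)) = φ p (μ (ii q)) := by
    intro q r hqr
    induction r, hqr using Nat.le_induction with
    | base => intro _ _ _; rfl
    | succ r hqr ih =>
      intro hrj p hp
      have hrj' : r < j := by omega
      have hlt : ii r < ii (r + 1) :=
        hmono (Set.mem_Iio.mpr hrj') (Set.mem_Iio.mpr hrj) (by omega)
      have hq_le : ii q ≤ ii r :=
        hmono.monotoneOn (Set.mem_Iio.mpr (by omega)) (Set.mem_Iio.mpr hrj') hqr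
      have hple : p ≤ ii (r + 1) - 1 := by omega
      have hc := (hcomm p (ii (r + 1) - 1) hple (μ (ii (r + 1)))).2
      have hch := hchain (r + 1) (by omega) hrj
      rw [← hc, hch]
      simpa using ih hrj' p hp
  intro m hm hmj
  set n := ii m with hn
  have hmem : ∀ a, a < j → a ∈ Set.Iio j := fun a ha => Set.mem_Iio.mpr ha
  have hj1 : j - 1 < j := by omega
  have hii0m : ii 0 < n := hmono (hmem 0 (by omega)) (hmem m hmj) hm
  have hiimm : ii (m - 1) < n := hmono (hmem (m - 1) (by omega)) (hmem m hmj) (by omega)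
  have hii0m1 : ii 0 ≤ ii (m - 1) :=
    hmono.monotoneOn (hmem 0 (by omega)) (hmem (m - 1) (by omega)) (by omega)
  have hnle : n ≤ ii (j - 1) :=
    hmono.monotoneOn (hmem m hmj) (hmem (j - 1) hj1) (by omega)
  have hn1 : 1 ≤ n := by omega
  -- the first point maps to μ n under φ n
  have hP0 : φ n (x 0) = μ n := by
    rw [hx0, down m (j - 1) (by omega) hj1 n le_rfl, hretr n (ii m) le_rfl]
  -- the last point does not
  have hPlast : φ n (x (k - 1)) ≠ μ n := by
    rw [hxlast, hretr n (ii 0) (le_of_lt hii0m)]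
    intro h
    exact absurd (hμinj h) (by omega)
  have hk2 : 2 ≤ k := by
    rcases Nat.lt_or_ge k 2 with h | h
    · exfalso
      have hk1 : k - 1 = 0 := by omega
      exact hPlast (by rw [hk1]; exact hP0)
    · exact h
  -- take the greatest index t with φ n (x t) = μ n
  set t := Nat.findGreatest (fun l => φ n (x l) = μ n) (k - 1) with ht
  have hPt : φ n (x t) = μ n := by
    have := Nat.findGreatest_spec (P := fun l => φ n (x l) = μ n)
      (m := 0) (n := k - 1) (Nat.zero_le _) hP0
    simpa [← ht] using this
  have htle : t ≤ k - 1 := by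
    have := Nat.findGreatest_le (P := fun l => φ n (x l) = μ n) (k - 1)
    simpa [← ht] using this
  have htne : t ≠ k - 1 := fun h => hPlast (h ▸ hPt)
  have ht1k : t + 1 < k := by omega
  have hnPt1 : ¬ φ n (x (t + 1)) = μ n := by
    have := Nat.findGreatest_is_greatest (P := fun l => φ n (x l) = μ n)
      (n := k - 1) (k := t + 1) (by omega) (by omega)
    simpa using this
  -- φ n (x (t+1)) is some μ s with s ≤ n - 1
  obtain ⟨s, hs, hys⟩ : ∃ s, s ∈ Set.Iic n ∧ μ s = φ n (x (t + 1)) := by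
    have : φ n (x (t + 1)) ∈ Set.range (φ n) := ⟨x (t + 1), rfl⟩
    rw [hrange n] at this
    exact this
  have hsn : s ≠ n := fun h => hnPt1 (by rw [← hys, h])
  have hsle : s ≤ n - 1 := by
    have := Set.mem_Iic.mp hs; omega
  -- key identities
  have key1 : φ (n - 1) (x t) = μ (ii (m - 1)) := by
    have h1 := (hcomm (n - 1) n (by omega) (x t)).2
    rw [← h1, hPt]
    exact hchain m hm hmj
  have key2 : φ (n - 1) (x (t + 1)) = φ n (x (t + 1)) := by
    have h1 := (hcomm (n - 1) n (by omega) (x (t + 1))).2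
    rw [← h1, ← hys, hretr (n - 1) s hsle]
  -- Lipschitz facts
  have lipn : LipschitzWith K (φ n) := hlip n (le_of_lt hii0m) hnle
  have lipn1 : LipschitzWith K (φ (n - 1)) := hlip (n - 1) (by omega) (by omega)
  have hd1 : dist (x t) (x (t + 1)) ≤ α := hstep t ht1k
  have hd2 : dist (x (t + 1)) (x t) ≤ α := by rwa [dist_comm]
  have b1 : dist (φ (n - 1) (x t)) (φ (n - 1) (x (t + 1))) ≤ (K : ℝ) * α :=
    le_trans (lipn1.dist_le_mul _ _) (by
      exact mul_le_mul_of_nonneg_left hd1 K.coe_nonneg)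
  have b2 : dist (φ n (x (t + 1))) (φ n (x t)) ≤ (K : ℝ) * α :=
    le_trans (lipn.dist_le_mul _ _) (by
      exact mul_le_mul_of_nonneg_left hd2 K.coe_nonneg)
  calc dist (μ (ii (m - 1))) (μ (ii m))
      = dist (φ (n - 1) (x t)) (φ n (x t)) := by rw [key1, hPt]
    _ ≤ dist (φ (n - 1) (x t)) (φ (n - 1) (x (t + 1)))
        + dist (φ (n - 1) (x (t + 1))) (φ n (x t)) := dist_triangle _ _ _
    _ = dist (φ (n - 1) (x t)) (φ (n - 1) (x (t + 1)))
        + dist (φ n (x (t + 1))) (φ n (x t)) := by rw [key2]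
    _ ≤ (K : ℝ) * α + (K : ℝ) * α := add_le_add b1 b2
    _ = 2 * (K : ℝ) * α := by ring
end

section
/- Let n ≥ 10 and let {φ_i}_{i=0}^n be a system of retractions on the graph circle C_n^0 with centre 0 = x_0 satisfying: φ_i(C_n^0) = {μ_0, ..., μ_i} for an enumeration μ_0 = 0, μ_1, ..., μ_n of C_n^0, each φ_i is the identity on its image, and φ_j φ_i = φ_i φ_j = φ_i for i ≤ j. Then there exists s ∈ {1,...,n} such that the Lipschitz constant of φ_s is at least (√(8n+1) − 1)/8. -/
open Set

section CircleAux

variable {M : Type*}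

/-- The circle point at (0-based) position `q` modulo `n`, i.e. `x (q % n + 1)`. -/
def cpt (n : ℕ) (x : Fin (n + 1) → M) (q : ℕ) : M :=
  x ⟨min (q % n + 1) n, Nat.lt_succ_of_le (min_le_right _ _)⟩

lemma cpt_small {n : ℕ} (x : Fin (n + 1) → M) {q : ℕ} (hq : q < n) :
    cpt n x q = x ⟨q + 1, by omega⟩ := by
  unfold cpt
  congr 1
  apply Fin.val_injective
  show min (q % n + 1) n = q + 1
  rw [Nat.mod_eq_of_lt hq]
  omega

lemma cpt_mod {n : ℕ} (x : Fin (n + 1) → M) (q : ℕ) :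
    cpt n x q = cpt n x (q % n) := by
  unfold cpt
  congr 1
  apply Fin.val_injective
  show min (q % n + 1) n = min (q % n % n + 1) n
  rw [Nat.mod_mod_of_dvd _ dvd_rfl]

lemma cpt_mem {n : ℕ} (x : Fin (n + 1) → M) (q : ℕ) : cpt n x q ∈ Set.range x :=
  ⟨_, rfl⟩

lemma mod_two_n {a n : ℕ} (hn : 0 < n) (h : a < 2 * n) :
    a % n = if a < n then a else a - n := by
  split_ifs with h1
  · exact Nat.mod_eq_of_lt h1
  · rw [Nat.mod_eq_sub_mod (by omega)]
    exact Nat.mod_eq_of_lt (by omega)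

/-- Occupied positions at stage `s`: position `q` (0-based, `< n`) such that the circle
point `x (q+1)` is among `μ 1, ..., μ s`. -/
def COcc (n : ℕ) (x μ : Fin (n + 1) → M) (s q : ℕ) : Prop :=
  q < n ∧ ∃ j : Fin (n + 1), (j : ℕ) ≤ s ∧ j ≠ 0 ∧ μ j = cpt n x q

/-- A gap at stage `s`: both endpoints `p` and `(p+g) % n` occupied, interior free. -/
def CGap (n : ℕ) (x μ : Fin (n + 1) → M) (s p g : ℕ) : Prop :=
  COcc n x μ s p ∧ 1 ≤ g ∧ g ≤ n ∧ COcc n x μ s ((p + g) % n) ∧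
    ∀ d, 0 < d → d < g → ¬ COcc n x μ s ((p + d) % n)

lemma cpt_adj [MetricSpace M] (n : ℕ) (hn2 : 2 ≤ n) (x : Fin (n + 1) → M)
    (hxinj : Function.Injective x)
    (hd : ∀ k l : Fin (n + 1), k ≠ 0 → l ≠ 0 →
      dist (x k) (x l) = min ((((k : ℕ) : ℤ) - ((l : ℕ) : ℤ)).natAbs : ℝ)
        ((n : ℝ) - ((((k : ℕ) : ℤ) - ((l : ℕ) : ℤ)).natAbs : ℝ)))
    (q : ℕ) :
    cpt n x q ≠ cpt n x (q + 1) ∧ dist (cpt n x q) (cpt n x (q + 1)) = 1 := by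
  have hnpos : 0 < n := by omega
  have h1 : q % n < n := Nat.mod_lt _ hnpos
  have h1' : (q + 1) % n < n := Nat.mod_lt _ hnpos
  have h2 : (q + 1) % n = (q % n + 1) % n := by
    conv_lhs => rw [Nat.add_mod]
    rw [Nat.mod_eq_of_lt (show 1 < n by omega)]
  have hnR : (2 : ℝ) ≤ (n : ℝ) := by exact_mod_cast hn2
  rw [cpt_mod x q, cpt_mod x (q + 1), cpt_small x h1, cpt_small x h1']
  by_cases hc : q % n + 1 < n
  · have h3 : (q + 1) % n = q % n + 1 := by rw [h2, Nat.mod_eq_of_lt hc]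
    have e2 : (⟨(q + 1) % n + 1, by omega⟩ : Fin (n + 1)) = ⟨q % n + 2, by omega⟩ := by
      apply Fin.val_injective; simp [h3]
    rw [e2]
    constructor
    · intro h
      have := congrArg Fin.val (hxinj h)
      simp at this
    · rw [hd _ _ (by intro h; have := congrArg Fin.val h; simp at this)
          (by intro h; have := congrArg Fin.val h; simp at this)]
      have hna : ((((q % n + 1 : ℕ) : ℤ) - ((q % n + 2 : ℕ) : ℤ)).natAbs) = 1 := by
        push_cast; omega
      norm_num [hna]
      linarith
  · have hqn : q % n = n - 1 := by omega
    have h3 : (q + 1) % n = 0 := by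
      rw [h2, hqn, show n - 1 + 1 = n by omega, Nat.mod_self]
    have e1 : (⟨q % n + 1, by omega⟩ : Fin (n + 1)) = ⟨n, by omega⟩ := by
      apply Fin.val_injective; simp [hqn]; omega
    have e2 : (⟨(q + 1) % n + 1, by omega⟩ : Fin (n + 1)) = ⟨1, by omega⟩ := by
      apply Fin.val_injective; simp [h3]
    rw [e1, e2]
    constructor
    · intro h
      have := congrArg Fin.val (hxinj h)
      simp at this; omega
    · rw [hd _ _ (by intro h; have := congrArg Fin.val h; simp at this; omega)
          (by intro h; have := congrArg Fin.val h; simp at this)]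
      have hna : ((((n : ℕ) : ℤ) - ((1 : ℕ) : ℤ)).natAbs) = n - 1 := by
        push_cast; omega
      rw [hna]
      have hc1 : ((n - 1 : ℕ) : ℝ) = (n : ℝ) - 1 := by
        rw [Nat.cast_sub (by omega)]; norm_num
      rw [hc1]
      rw [min_eq_right (by linarith)]
      ring

end CircleAux

set_option maxHeartbeats 1600000 in
/-- any commuting system of retractions `φ i` (onto nested sets
`{μ 0, ..., μ i}`, enumerating the circle, with `μ 0` the centre) on the graph circle
`C_n^0` of radius `n ≥ 10` contains a map with Lipschitz constant at least
`(√(8n+1) - 1)/8`. The circle is realized as points `x 0, ..., x n` of a metric space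
with the graph-circle distances. -/
theorem circle_retraction_lower_bound {M : Type*} [MetricSpace M]
    (n : ℕ) (hn : 10 ≤ n) (x : Fin (n + 1) → M) (hxinj : Function.Injective x)
    (hd0 : ∀ k : Fin (n + 1), k ≠ 0 → dist (x k) (x 0) = (n : ℝ))
    (hd : ∀ k l : Fin (n + 1), k ≠ 0 → l ≠ 0 →
      dist (x k) (x l) = min ((((k : ℕ) : ℤ) - ((l : ℕ) : ℤ)).natAbs : ℝ)
        ((n : ℝ) - ((((k : ℕ) : ℤ) - ((l : ℕ) : ℤ)).natAbs : ℝ)))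
    (μ : Fin (n + 1) → M) (hμ0 : μ 0 = x 0) (hμinj : Function.Injective μ)
    (hμrange : Set.range μ = Set.range x)
    (φ : Fin (n + 1) → M → M)
    (hmaps : ∀ i : Fin (n + 1), ∀ p ∈ Set.range x, ∃ j ≤ i, φ i p = μ j)
    (hretr : ∀ i : Fin (n + 1), ∀ j ≤ i, φ i (μ j) = μ j)
    (hcomm : ∀ i j : Fin (n + 1), i ≤ j → ∀ p ∈ Set.range x,
      φ j (φ i p) = φ i p ∧ φ i (φ j p) = φ i p) :
    ∃ s : Fin (n + 1), s ≠ 0 ∧ ∃ a ∈ Set.range x, ∃ b ∈ Set.range x, a ≠ b ∧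
      (Real.sqrt (8 * n + 1) - 1) / 8 * dist a b ≤ dist (φ s a) (φ s b) := by
  classical
  have hnpos : 0 < n := by omega
  have hn2 : 2 ≤ n := by omega
  set L : ℝ := (Real.sqrt (8 * (n : ℝ) + 1) - 1) / 8 with hLdef
  have h0 : (0 : ℝ) ≤ 8 * (n : ℝ) + 1 := by positivity
  have hn8 : 8 * L ^ 2 + 2 * L = (n : ℝ) := by
    rw [hLdef]; linear_combination (Real.sq_sqrt h0) / 8
  rcases le_or_gt L 1 with hL1 | hL1
  · -- trivial witness, ratio 1 suffices since L ≤ 1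
    have h1lt : (1 : ℕ) < n + 1 := by omega
    refine ⟨⟨1, h1lt⟩, ?_, μ 0, ⟨0, hμ0.symm⟩, μ ⟨1, h1lt⟩, ?_, ?_, ?_⟩
    · intro h; have := congrArg Fin.val h; simp at this
    · rw [← hμrange]; exact Set.mem_range_self _
    · intro h; have := congrArg Fin.val (hμinj h); simp at this
    · rw [hretr ⟨1, h1lt⟩ 0 (Fin.zero_le _),
          hretr ⟨1, h1lt⟩ ⟨1, h1lt⟩ le_rfl]
      calc L * dist (μ 0) (μ ⟨1, h1lt⟩) ≤ 1 * dist (μ 0) (μ ⟨1, h1lt⟩) :=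
            mul_le_mul_of_nonneg_right hL1 dist_nonneg
        _ = _ := one_mul _
  · by_contra hcon0
    push_neg at hcon0
    have hLpos : (0 : ℝ) < L := by linarith
    have hLn : L < (n : ℝ) := by nlinarith [hn8, hL1]
    -- Key lemma: a gap of length `g ≥ L` at a stage `t ∈ [1,n]` satisfies `n - g < L*g`.
    have hD : ∀ t, 1 ≤ t → t ≤ n → ∀ p g, CGap n x μ t p g → L ≤ (g : ℝ) →
        ((n - g : ℕ) : ℝ) < L * g := by
      intro t ht1 htn p g hgap hLg
      obtain ⟨hOccp, hg1, hgn, hOccv, hintr⟩ := hgap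
      have hpn : p < n := hOccp.1
      set v : ℕ := (p + g) % n with hvdef
      have hvn : v < n := Nat.mod_lt _ hnpos
      have hvdisj : (v = p + g ∧ p + g < n) ∨ (n ≤ p + g ∧ v = p + g - n) := by
        rw [hvdef, mod_two_n hnpos (by omega)]
        split_ifs with hh
        · exact Or.inl ⟨rfl, hh⟩
        · exact Or.inr ⟨by omega, rfl⟩
      set τ : Fin (n + 1) := ⟨t, by omega⟩ with hτdef
      have hτval : (τ : ℕ) = t := rfl
      have hτ0 : τ ≠ 0 := by
        intro h
        have h2 := congrArg Fin.val h
        rw [hτval] at h2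
        simp at h2
        omega
      have hfix : ∀ q, COcc n x μ t q → φ τ (cpt n x q) = cpt n x q := by
        rintro q ⟨-, j, hjt, -, hjv⟩
        rw [← hjv]
        exact hretr τ j (Fin.le_def.mpr (by omega))
      -- no value is ever the centre `x 0`
      have hne0 : ∀ e, φ τ (cpt n x (p + min e g)) ≠ x 0 := by
        by_contra hbad
        push_neg at hbad
        obtain ⟨e0, he0⟩ := hbad
        have hex : ∃ e, φ τ (cpt n x (p + min e g)) = x 0 := ⟨e0, he0⟩
        have hdm := Nat.find_spec hex
        set dm := Nat.find hex with hdmdef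
        have hdm0 : dm ≠ 0 := by
          intro h00
          rw [h00, show min 0 g = 0 by omega, add_zero, hfix p hOccp,
            cpt_small x hpn] at hdm
          have := congrArg Fin.val (hxinj hdm)
          simp at this
        have hdmg : dm ≤ g := by
          by_contra hgt
          push_neg at hgt
          have hPg : φ τ (cpt n x (p + min g g)) = x 0 := by
            rw [min_self]
            rw [show min dm g = g by omega] at hdm
            exact hdm
          exact Nat.find_min hex hgt hPg
        have hprev := Nat.find_min hex (show dm - 1 < dm by omega)
        rw [show min (dm - 1) g = dm - 1 by omega] at hprev
        rw [show min dm g = dm by omega] at hdm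
        obtain ⟨j, hjle, hjv⟩ := hmaps τ (cpt n x (p + (dm - 1))) (cpt_mem x _)
        obtain ⟨kk, hkk⟩ : μ j ∈ Set.range x := by
          rw [← hμrange]; exact Set.mem_range_self _
        have hkk0 : kk ≠ 0 := by
          intro h00
          apply hprev
          rw [hjv, ← hkk, h00]
        have hadj := cpt_adj n hn2 x hxinj hd (p + (dm - 1))
        rw [show p + (dm - 1) + 1 = p + dm by omega] at hadj
        have hcc := hcon0 τ hτ0 (cpt n x (p + (dm - 1))) (cpt_mem x _)
          (cpt n x (p + dm)) (cpt_mem x _) hadj.1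
        rw [hadj.2, mul_one, hdm, hjv, ← hkk, hd0 kk hkk0] at hcc
        linarith
      -- the value data: indices and positions
      have hval : ∀ e : ℕ, ∃ j : Fin (n + 1), (j : ℕ) ≤ t ∧
          μ j = φ τ (cpt n x (p + min e g)) := by
        intro e
        obtain ⟨j, hj1, hj2⟩ := hmaps τ (cpt n x (p + min e g)) (cpt_mem x _)
        exact ⟨j, by have := Fin.le_def.mp hj1; omega, hj2.symm⟩
      choose jf hjft hjfv using hval
      have hjf0 : ∀ e, jf e ≠ 0 := by
        intro e h00
        apply hne0 e
        rw [← hjfv e, h00, hμ0]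
      have hvalx : ∀ e, ∃ kk : Fin (n + 1), kk ≠ 0 ∧ x kk = μ (jf e) := by
        intro e
        obtain ⟨kk, hkk⟩ : μ (jf e) ∈ Set.range x := by
          rw [← hμrange]; exact Set.mem_range_self _
        refine ⟨kk, ?_, hkk⟩
        intro h00
        apply hne0 e
        rw [← hjfv e, ← hkk, h00]
      choose kf hkf0 hkfx using hvalx
      have hk1 : ∀ e, 1 ≤ (kf e : ℕ) ∧ (kf e : ℕ) ≤ n := by
        intro e
        constructor
        · by_contra hk
          apply hkf0 e
          apply Fin.val_injective
          rw [Fin.val_zero]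
          omega
        · exact Nat.lt_succ_iff.mp (kf e).isLt
      set pos : ℕ → ℕ := fun e => (kf e : ℕ) - 1 with hposdef
      have hposval : ∀ e, pos e = (kf e : ℕ) - 1 := fun e => rfl
      have hposlt : ∀ e, pos e < n := by
        intro e
        have := hk1 e
        rw [hposval e]
        omega
      have hcptpos : ∀ e, cpt n x (pos e) = μ (jf e) := by
        intro e
        rw [cpt_small x (hposlt e), ← hkfx e]
        congr 1
        apply Fin.val_injective
        show pos e + 1 = (kf e : ℕ)
        have := hk1 e
        rw [hposval e]
        omega
      -- value positions are never in the gap interior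
      have hOccPos : ∀ e dd, 0 < dd → dd < g → pos e ≠ (p + dd) % n := by
        intro e dd h1 h2 heq
        apply hintr dd h1 h2
        exact ⟨by rw [← heq]; exact hposlt e, jf e, hjft e, hjf0 e,
          by rw [← heq]; exact (hcptpos e).symm⟩
      set m : ℕ := n - g with hmdef
      set χ : ℕ → ℕ := fun e => if v ≤ pos e then pos e - v else pos e + n - v
        with hχdef
      have hχbr : ∀ e, (v ≤ pos e ∧ χ e = pos e - v) ∨
          (pos e < v ∧ χ e = pos e + n - v) := by
        intro e
        by_cases hb : v ≤ pos e
        · exact Or.inl ⟨hb, by rw [hχdef]; simp [hb]⟩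
        · exact Or.inr ⟨by omega, by rw [hχdef]; simp [hb]⟩
      have hχlt : ∀ e, χ e < n := by
        intro e
        have h1 := hposlt e
        rcases hχbr e with ⟨h2, h3⟩ | ⟨h2, h3⟩ <;> omega
      have hχm : ∀ e, χ e ≤ m := by
        intro e
        by_contra hgt
        push_neg at hgt
        set e' : ℕ := χ e - m with he'def
        have he'1 : 0 < e' := by omega
        have he'2 : e' < g := by
          have := hχlt e
          omega
        apply hOccPos e e' he'1 he'2
        rw [mod_two_n hnpos (by omega)]
        have hple := hposlt e
        rcases hχbr e with ⟨h2, h3⟩ | ⟨h2, h3⟩ <;>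
          rcases hvdisj with ⟨h4, h5⟩ | ⟨h4, h5⟩ <;>
          split_ifs <;> omega
      -- endpoint positions
      have hpos0 : pos 0 = p := by
        have h1 : φ τ (cpt n x (p + min 0 g)) = cpt n x p := by
          rw [show min 0 g = 0 by omega, add_zero]
          exact hfix p hOccp
        have h2 : cpt n x (pos 0) = cpt n x p := by
          rw [hcptpos 0, hjfv 0, h1]
        rw [cpt_small x (hposlt 0), cpt_small x hpn] at h2
        have := congrArg Fin.val (hxinj h2)
        simpa using this
      have hposg : pos g = v := by
        have h1 : φ τ (cpt n x (p + min g g)) = cpt n x v := by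
          rw [min_self, cpt_mod x (p + g), ← hvdef]
          exact hfix v hOccv
        have h2 : cpt n x (pos g) = cpt n x v := by
          rw [hcptpos g, hjfv g, h1]
        rw [cpt_small x (hposlt g), cpt_small x hvn] at h2
        have := congrArg Fin.val (hxinj h2)
        simpa using this
      have hχ0 : χ 0 = m := by
        rcases hχbr 0 with ⟨h2, h3⟩ | ⟨h2, h3⟩ <;>
          rcases hvdisj with ⟨h4, h5⟩ | ⟨h4, h5⟩ <;> omega
      have hχg : χ g = 0 := by
        rcases hχbr g with ⟨h2, h3⟩ | ⟨h2, h3⟩ <;> omega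
      -- the step bound
      have hstep : ∀ e, e < g → |((χ (e + 1) : ℕ) : ℝ) - ((χ e : ℕ) : ℝ)| < L := by
        intro e heg
        have hb1 := hχbr e
        have hb2 := hχbr (e + 1)
        have hm1 : ((χ e : ℕ) : ℝ) ≤ ((m : ℕ) : ℝ) := by exact_mod_cast hχm e
        have hm2 : ((χ (e + 1) : ℕ) : ℝ) ≤ ((m : ℕ) : ℝ) := by exact_mod_cast hχm (e + 1)
        have hχ1nn : (0 : ℝ) ≤ ((χ e : ℕ) : ℝ) := Nat.cast_nonneg _
        have hχ2nn : (0 : ℝ) ≤ ((χ (e + 1) : ℕ) : ℝ) := Nat.cast_nonneg _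
        have hmR : ((m : ℕ) : ℝ) = (n : ℝ) - (g : ℝ) := by
          rw [hmdef, Nat.cast_sub hgn]
        have hAn : ((pos e : ℕ) : ℝ) < (n : ℝ) := by exact_mod_cast hposlt e
        have hBn : ((pos (e + 1) : ℕ) : ℝ) < (n : ℝ) := by exact_mod_cast hposlt (e + 1)
        by_cases hkk : kf (e + 1) = kf e
        · have hpe : pos (e + 1) = pos e := by rw [hposval, hposval, hkk]
          have heq : χ (e + 1) = χ e := by
            rcases hb1 with ⟨h2, h3⟩ | ⟨h2, h3⟩ <;>
              rcases hb2 with ⟨h4, h5⟩ | ⟨h4, h5⟩ <;> omega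
          rw [heq]
          simpa using hLpos
        · -- images of adjacent points
          have hadj := cpt_adj n hn2 x hxinj hd (p + e)
          rw [show p + e + 1 = p + (e + 1) by omega] at hadj
          have hφ1 : φ τ (cpt n x (p + e)) = x (kf e) := by
            have hh := hjfv e
            rw [show min e g = e by omega] at hh
            rw [← hh, hkfx e]
          have hφ2 : φ τ (cpt n x (p + (e + 1))) = x (kf (e + 1)) := by
            have hh := hjfv (e + 1)
            rw [show min (e + 1) g = e + 1 by omega] at hh
            rw [← hh, hkfx (e + 1)]
          have hcc := hcon0 τ hτ0 (cpt n x (p + e)) (cpt_mem x _)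
            (cpt n x (p + (e + 1))) (cpt_mem x _) hadj.1
          rw [hadj.2, mul_one, hφ1, hφ2,
            hd _ _ (hkf0 e) (hkf0 (e + 1))] at hcc
          -- translate natAbs to |A - B|
          have hiA : ((kf e : ℕ) : ℤ) = (pos e : ℤ) + 1 := by
            have := hk1 e
            have := hposval e
            omega
          have hiB : ((kf (e + 1) : ℕ) : ℤ) = (pos (e + 1) : ℤ) + 1 := by
            have := hk1 (e + 1)
            have := hposval (e + 1)
            omega
          have hzz : (((kf e : ℕ) : ℤ) - ((kf (e + 1) : ℕ) : ℤ)) =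
              (pos e : ℤ) - (pos (e + 1) : ℤ) := by omega
          have hNabs : (((((kf e : ℕ) : ℤ) - ((kf (e + 1) : ℕ) : ℤ)).natAbs : ℕ) : ℝ) =
              |((pos e : ℕ) : ℝ) - ((pos (e + 1) : ℕ) : ℝ)| := by
            rw [hzz, Nat.cast_natAbs]
            push_cast [Int.cast_abs]
            ring_nf
          rw [hNabs] at hcc
          -- now case bash
          rcases hb1 with ⟨h2, h3⟩ | ⟨h2, h3⟩ <;> rcases hb2 with ⟨h4, h5⟩ | ⟨h4, h5⟩
          · have e1 : ((χ e : ℕ) : ℝ) + (v : ℝ) = ((pos e : ℕ) : ℝ) := by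
              exact_mod_cast congrArg (Nat.cast : ℕ → ℝ) (show χ e + v = pos e by omega)
            have e2 : ((χ (e + 1) : ℕ) : ℝ) + (v : ℝ) = ((pos (e + 1) : ℕ) : ℝ) := by
              exact_mod_cast congrArg (Nat.cast : ℕ → ℝ)
                (show χ (e + 1) + v = pos (e + 1) by omega)
            rcases min_lt_iff.mp hcc with hc | hc <;>
              rcases abs_cases (((pos e : ℕ) : ℝ) - ((pos (e + 1) : ℕ) : ℝ)) with
                ⟨ha1, ha2⟩ | ⟨ha1, ha2⟩ <;> rw [ha1] at hc <;>
              (rw [abs_lt]; constructor <;> linarith)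
          · have e1 : ((χ e : ℕ) : ℝ) + (v : ℝ) = ((pos e : ℕ) : ℝ) := by
              exact_mod_cast congrArg (Nat.cast : ℕ → ℝ) (show χ e + v = pos e by omega)
            have e2 : ((χ (e + 1) : ℕ) : ℝ) + (v : ℝ) = ((pos (e + 1) : ℕ) : ℝ) + (n : ℝ) := by
              exact_mod_cast congrArg (Nat.cast : ℕ → ℝ)
                (show χ (e + 1) + v = pos (e + 1) + n by omega)
            rcases min_lt_iff.mp hcc with hc | hc <;>
              rcases abs_cases (((pos e : ℕ) : ℝ) - ((pos (e + 1) : ℕ) : ℝ)) with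
                ⟨ha1, ha2⟩ | ⟨ha1, ha2⟩ <;> rw [ha1] at hc <;>
              (rw [abs_lt]; constructor <;> linarith)
          · have e1 : ((χ e : ℕ) : ℝ) + (v : ℝ) = ((pos e : ℕ) : ℝ) + (n : ℝ) := by
              exact_mod_cast congrArg (Nat.cast : ℕ → ℝ)
                (show χ e + v = pos e + n by omega)
            have e2 : ((χ (e + 1) : ℕ) : ℝ) + (v : ℝ) = ((pos (e + 1) : ℕ) : ℝ) := by
              exact_mod_cast congrArg (Nat.cast : ℕ → ℝ)
                (show χ (e + 1) + v = pos (e + 1) by omega)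
            rcases min_lt_iff.mp hcc with hc | hc <;>
              rcases abs_cases (((pos e : ℕ) : ℝ) - ((pos (e + 1) : ℕ) : ℝ)) with
                ⟨ha1, ha2⟩ | ⟨ha1, ha2⟩ <;> rw [ha1] at hc <;>
              (rw [abs_lt]; constructor <;> linarith)
          · have e1 : ((χ e : ℕ) : ℝ) + (v : ℝ) = ((pos e : ℕ) : ℝ) + (n : ℝ) := by
              exact_mod_cast congrArg (Nat.cast : ℕ → ℝ)
                (show χ e + v = pos e + n by omega)
            have e2 : ((χ (e + 1) : ℕ) : ℝ) + (v : ℝ) = ((pos (e + 1) : ℕ) : ℝ) + (n : ℝ) := by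
              exact_mod_cast congrArg (Nat.cast : ℕ → ℝ)
                (show χ (e + 1) + v = pos (e + 1) + n by omega)
            rcases min_lt_iff.mp hcc with hc | hc <;>
              rcases abs_cases (((pos e : ℕ) : ℝ) - ((pos (e + 1) : ℕ) : ℝ)) with
                ⟨ha1, ha2⟩ | ⟨ha1, ha2⟩ <;> rw [ha1] at hc <;>
              (rw [abs_lt]; constructor <;> linarith)
      -- telescoping
      have htele : ∑ i ∈ Finset.range g, (((χ (i + 1) : ℕ) : ℝ) - ((χ i : ℕ) : ℝ)) =
          ((χ g : ℕ) : ℝ) - ((χ 0 : ℕ) : ℝ) :=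
        Finset.sum_range_sub (fun i => ((χ i : ℕ) : ℝ)) g
      have habs : ((m : ℕ) : ℝ) ≤
          ∑ i ∈ Finset.range g, |((χ (i + 1) : ℕ) : ℝ) - ((χ i : ℕ) : ℝ)| := by
        have h1 : ((m : ℕ) : ℝ) = |((χ g : ℕ) : ℝ) - ((χ 0 : ℕ) : ℝ)| := by
          rw [hχg, hχ0]
          simp [Nat.abs_cast]
        rw [h1, ← htele]
        exact Finset.abs_sum_le_sum_abs _ _
      have hsum : ∑ i ∈ Finset.range g, |((χ (i + 1) : ℕ) : ℝ) - ((χ i : ℕ) : ℝ)| <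
          ∑ _i ∈ Finset.range g, L := by
        apply Finset.sum_lt_sum_of_nonempty
        · rw [Finset.nonempty_range_iff]; omega
        · intro i hi
          exact hstep i (Finset.mem_range.mp hi)
      rw [Finset.sum_const, Finset.card_range, nsmul_eq_mul] at hsum
      calc ((n - g : ℕ) : ℝ) ≤ _ := habs
        _ < (g : ℝ) * L := hsum
        _ = L * g := mul_comm _ _
    -- the predicate: some gap of real length ≥ L exists at stage s
    set Q : ℕ → Prop := fun s => ∃ p g, CGap n x μ s p g ∧ L ≤ (g : ℝ) with hQdef
    have hQ1 : Q 1 := by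
      have h1lt : (1 : ℕ) < n + 1 := by omega
      obtain ⟨k1, hk1⟩ : μ ⟨1, h1lt⟩ ∈ Set.range x := by
        rw [← hμrange]; exact Set.mem_range_self _
      have hk10 : k1 ≠ 0 := by
        intro h
        rw [h, ← hμ0] at hk1
        have := congrArg Fin.val (hμinj hk1)
        simp at this
      have hk1v : 1 ≤ (k1 : ℕ) ∧ (k1 : ℕ) ≤ n := by
        constructor
        · by_contra hk
          apply hk10
          apply Fin.val_injective
          rw [Fin.val_zero]
          omega
        · exact Nat.lt_succ_iff.mp k1.isLt
      set p1 : ℕ := (k1 : ℕ) - 1 with hp1def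
      have hp1n : p1 < n := by omega
      have hcp : cpt n x p1 = μ ⟨1, h1lt⟩ := by
        rw [cpt_small x hp1n, ← hk1]
        congr 1
        apply Fin.val_injective
        show p1 + 1 = (k1 : ℕ)
        omega
      have hOcc1 : COcc n x μ 1 p1 := by
        refine ⟨hp1n, ⟨1, h1lt⟩, le_rfl, ?_, hcp.symm⟩
        intro h
        have := congrArg Fin.val h
        simp at this
      rw [hQdef]
      refine ⟨p1, n, ⟨hOcc1, by omega, le_rfl, ?_, ?_⟩, hLn.le⟩
      · have : (p1 + n) % n = p1 := by
          rw [mod_two_n hnpos (by omega)]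
          split_ifs <;> omega
        rw [this]
        exact hOcc1
      · rintro d h1 h2 ⟨hlt, j, hj1, hj0, hjv⟩
        have hjval : (j : ℕ) = 1 := by
          have : (j : ℕ) ≠ 0 := by
            intro h
            apply hj0
            apply Fin.val_injective
            rw [Fin.val_zero]
            omega
          omega
        have hj : j = ⟨1, h1lt⟩ := by
          apply Fin.val_injective
          rw [hjval]
        rw [hj, ← hcp] at hjv
        rw [cpt_small x hlt, cpt_small x hp1n] at hjv
        have heq := congrArg Fin.val (hxinj hjv)
        simp at heq
        rw [mod_two_n hnpos (by omega)] at heq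
        split_ifs at heq <;> omega
    have hQn : ¬ Q n := by
      rw [hQdef]
      rintro ⟨p, g, ⟨⟨hpn, -⟩, hg1, hgn, -, hintr⟩, hLg⟩
      have hg2 : 2 ≤ g := by
        by_contra hh
        push_neg at hh
        have : (g : ℝ) ≤ 1 := by exact_mod_cast (by omega : g ≤ 1)
        linarith
      have hz : (p + 1) % n < n := Nat.mod_lt _ hnpos
      apply hintr 1 (by omega) (by omega)
      obtain ⟨j, hj⟩ : cpt n x ((p + 1) % n) ∈ Set.range μ := by
        rw [hμrange]; exact cpt_mem x _
      refine ⟨hz, j, Nat.lt_succ_iff.mp j.isLt, ?_, hj⟩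
      intro h0
      rw [h0, hμ0, cpt_small x hz] at hj
      have := congrArg Fin.val (hxinj hj)
      simp at this
    set t := Nat.findGreatest Q n with htdef
    have ht1 : 1 ≤ t := Nat.le_findGreatest (by omega) hQ1
    have htn : t ≤ n := Nat.findGreatest_le n
    have hQt : Q t := Nat.findGreatest_spec (by omega : 1 ≤ n) hQ1
    have htln : t < n := by
      rcases lt_or_eq_of_le htn with h | h
      · exact h
      · exact absurd (h ▸ hQt) hQn
    have hQt1 : ¬ Q (t + 1) := Nat.findGreatest_is_greatest (n := n) (by omega : Nat.findGreatest Q n < t + 1) (by omega)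
    obtain ⟨p, g, hgap, hLg⟩ := hQt
    obtain ⟨hOccp, hg1, hgn, hOccv, hintr⟩ := hgap
    have hpn : p < n := hOccp.1
    have hmain := hD t ht1 htn p g ⟨hOccp, hg1, hgn, hOccv, hintr⟩ hLg
    have hOmono : ∀ z, COcc n x μ t z → COcc n x μ (t + 1) z := by
      rintro z ⟨hz, j, hj1, hj0, hjv⟩
      exact ⟨hz, j, by omega, hj0, hjv⟩
    have hOsucc : ∀ z, COcc n x μ (t + 1) z →
        COcc n x μ t z ∨ μ ⟨t + 1, by omega⟩ = cpt n x z := by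
      rintro z ⟨hz, j, hj1, hj0, hjv⟩
      by_cases hle : (j : ℕ) ≤ t
      · exact Or.inl ⟨hz, j, hle, hj0, hjv⟩
      · refine Or.inr ?_
        have hj' : j = ⟨t + 1, by omega⟩ := by
          apply Fin.val_injective
          show (j : ℕ) = t + 1
          omega
        rw [← hj']
        exact hjv
    by_cases hins : ∃ d, 0 < d ∧ d < g ∧ μ ⟨t + 1, by omega⟩ = cpt n x ((p + d) % n)
    · obtain ⟨d₀, hd₀1, hd₀g, hμq⟩ := hins
      have htne : (⟨t + 1, by omega⟩ : Fin (n + 1)) ≠ 0 := by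
        intro h
        have := congrArg Fin.val h
        simp at this
      have hOq : COcc n x μ (t + 1) ((p + d₀) % n) :=
        ⟨Nat.mod_lt _ hnpos, ⟨t + 1, by omega⟩, le_rfl, htne, hμq⟩
      have hGap1 : CGap n x μ (t + 1) p d₀ := by
        refine ⟨hOmono _ hOccp, hd₀1, by omega, hOq, ?_⟩
        intro e he1 he2 hOe
        rcases hOsucc _ hOe with hOt | hμe
        · exact hintr e he1 (by omega) hOt
        · have h1 : (p + e) % n = (p + d₀) % n := by
            have h2 := hμe.symm.trans hμq
            rw [cpt_small x (Nat.mod_lt _ hnpos), cpt_small x (Nat.mod_lt _ hnpos)] at h2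
            have := congrArg Fin.val (hxinj h2)
            simpa using this
          rw [mod_two_n hnpos (by omega), mod_two_n hnpos (by omega)] at h1
          split_ifs at h1 <;> omega
      have hGap2 : CGap n x μ (t + 1) ((p + d₀) % n) (g - d₀) := by
        refine ⟨hOq, by omega, by omega, ?_, ?_⟩
        · have h2 : ((p + d₀) % n + (g - d₀)) % n = (p + g) % n := by
            rw [mod_two_n hnpos (show p + d₀ < 2 * n by omega)]
            split_ifs with hh
            · congr 1
              omega
            · rw [mod_two_n hnpos (by omega), mod_two_n hnpos (by omega)]
              split_ifs <;> omega
          rw [h2]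
          exact hOmono _ hOccv
        · intro e he1 he2 hOe
          have harg : ((p + d₀) % n + e) % n = (p + (d₀ + e)) % n := by
            rw [mod_two_n hnpos (show p + d₀ < 2 * n by omega)]
            split_ifs with hh
            · congr 1
              omega
            · rw [mod_two_n hnpos (by omega), mod_two_n hnpos (by omega)]
              split_ifs <;> omega
          rw [harg] at hOe
          rcases hOsucc _ hOe with hOt | hμe
          · exact hintr (d₀ + e) (by omega) (by omega) hOt
          · have h1 : (p + (d₀ + e)) % n = (p + d₀) % n := by
              have h2 := hμe.symm.trans hμq
              rw [cpt_small x (Nat.mod_lt _ hnpos), cpt_small x (Nat.mod_lt _ hnpos)] at h2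
              have := congrArg Fin.val (hxinj h2)
              simpa using this
            rw [mod_two_n hnpos (by omega), mod_two_n hnpos (by omega)] at h1
            split_ifs at h1 <;> omega
      have hA : (d₀ : ℝ) < L := by
        by_contra hh
        push_neg at hh
        exact hQt1 ⟨p, d₀, hGap1, hh⟩
      have hB : ((g - d₀ : ℕ) : ℝ) < L := by
        by_contra hh
        push_neg at hh
        exact hQt1 ⟨(p + d₀) % n, g - d₀, hGap2, hh⟩
      have hg2L : (g : ℝ) < 2 * L := by
        have hsplit : (g : ℝ) = ((d₀ : ℕ) : ℝ) + ((g - d₀ : ℕ) : ℝ) := by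
          rw [← Nat.cast_add]
          congr 1
          omega
        rw [hsplit]
        linarith
      rw [Nat.cast_sub hgn] at hmain
      nlinarith [hmain, hg2L, hLg, hL1, hn8, mul_lt_mul_of_pos_right hg2L hLpos]
    · apply hQt1
      refine ⟨p, g, ⟨hOmono _ hOccp, hg1, hgn, hOmono _ hOccv, ?_⟩, hLg⟩
      intro e he1 he2 hOe
      rcases hOsucc _ hOe with hOt | hμe
      · exact hintr e he1 he2 hOt
      · exact hins ⟨e, he1, he2, hμe⟩
end

section
/- In the setup of a system of retractions on a circle C_n^0 with n ≥ 10: if φ_1(y) = 0 for some y ∈ C_n = C_n^0 \ {x_0}, then there exist points w, z ∈ C_n^0 with d(w, z) = 1 and d(φ_1(w), φ_1(z)) = n; consequently Lip(φ_1) ≥ n. Hence if all φ_i are K-Lipschitz with K < n, then φ_1 maps every point of C_n to μ_1. -/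
open scoped NNReal
open Fin.NatCast

private lemma chain_iff (Q : ℕ → Prop) :
    ∀ a b : ℕ, a ≤ b → (∀ j, a ≤ j → j < b → (Q j ↔ Q (j + 1))) → (Q a ↔ Q b) := by
  intro a b hab h
  induction b, hab using Nat.le_induction with
  | base => exact Iff.rfl
  | succ b hb ih =>
    exact (ih (fun j hj hjb => h j hj (hjb.trans (Nat.lt_succ_self b)))).trans
      (h b hb (Nat.lt_succ_self b))

/-- in the circle setup with `n ≥ 10`: if `φ 1` sends some point of
`C_n = C_n^0 \ {x 0}` to the centre, then there are points `w, z` with `d(w,z) = 1` and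
`d(φ 1 w, φ 1 z) = n` (so `Lip (φ 1) ≥ n`); hence if all `φ i` are `K`-Lipschitz with
`K < n`, then `φ 1` maps every point of `C_n` to `μ 1`. -/
theorem circle_phi_one {M : Type*} [MetricSpace M]
    (n : ℕ) (hn : 10 ≤ n) (x : Fin (n + 1) → M) (hxinj : Function.Injective x)
    (hd0 : ∀ k : Fin (n + 1), k ≠ 0 → dist (x k) (x 0) = (n : ℝ))
    (hd : ∀ k l : Fin (n + 1), k ≠ 0 → l ≠ 0 →
      dist (x k) (x l) = min ((((k : ℕ) : ℤ) - ((l : ℕ) : ℤ)).natAbs : ℝ)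
        ((n : ℝ) - ((((k : ℕ) : ℤ) - ((l : ℕ) : ℤ)).natAbs : ℝ)))
    (μ : Fin (n + 1) → M) (hμ0 : μ 0 = x 0) (hμinj : Function.Injective μ)
    (hμrange : Set.range μ = Set.range x)
    (φ : Fin (n + 1) → M → M)
    (hmaps : ∀ i : Fin (n + 1), ∀ p ∈ Set.range x, ∃ j ≤ i, φ i p = μ j)
    (hretr : ∀ i : Fin (n + 1), ∀ j ≤ i, φ i (μ j) = μ j)
    (hcomm : ∀ i j : Fin (n + 1), i ≤ j → ∀ p ∈ Set.range x,
      φ j (φ i p) = φ i p ∧ φ i (φ j p) = φ i p) :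
    ((∃ y ∈ Set.range x, y ≠ x 0 ∧ φ 1 y = x 0) →
      ∃ w ∈ Set.range x, ∃ z ∈ Set.range x, dist w z = 1 ∧
        dist (φ 1 w) (φ 1 z) = (n : ℝ) ∧ (n : ℝ) * dist w z ≤ dist (φ 1 w) (φ 1 z)) ∧
    (∀ K : ℝ≥0, (K : ℝ) < n → (∀ i, LipschitzOnWith K (φ i) (Set.range x)) →
      ∀ y ∈ Set.range x, y ≠ x 0 → φ 1 y = μ 1) := by
  have hval1 : (1 : Fin (n + 1)).val = 1 := by
    rw [Fin.val_one']; exact Nat.mod_eq_of_lt (by omega)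
  -- dichotomy: every point of range x goes to μ 0 = x 0 or μ 1 under φ 1
  have hdich : ∀ k : Fin (n + 1), φ 1 (x k) = x 0 ∨ φ 1 (x k) = μ 1 := by
    intro k
    obtain ⟨jj, hjle, hjeq⟩ := hmaps 1 (x k) ⟨k, rfl⟩
    have hjv : jj.val ≤ 1 := by
      have := hjle; rw [Fin.le_def, hval1] at this; exact this
    rcases Nat.le_one_iff_eq_zero_or_eq_one.mp hjv with h0 | h1
    · left; rw [hjeq, show jj = 0 from Fin.ext (by simpa using h0), hμ0]
    · right; rw [hjeq, show jj = (1 : Fin (n+1)) from Fin.ext (by rw [hval1]; exact h1)]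
  -- μ 1 is a circle point different from x 0
  obtain ⟨m, hm⟩ : μ 1 ∈ Set.range x := hμrange ▸ Set.mem_range_self 1
  have hμ1ne : μ 1 ≠ x 0 := by
    rw [← hμ0]; intro h; have := hμinj h
    apply absurd (congrArg Fin.val this); rw [hval1]; simp
  have hm0 : m ≠ 0 := by rintro rfl; exact hμ1ne hm.symm
  have hdist0μ : dist (x 0) (μ 1) = (n : ℝ) := by
    rw [← hm, dist_comm]; exact hd0 m hm0
  have main : (∃ y ∈ Set.range x, y ≠ x 0 ∧ φ 1 y = x 0) →
      ∃ w ∈ Set.range x, ∃ z ∈ Set.range x, dist w z = 1 ∧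
        dist (φ 1 w) (φ 1 z) = (n : ℝ) ∧ (n : ℝ) * dist w z ≤ dist (φ 1 w) (φ 1 z) := by
    rintro ⟨y, ⟨k0, rfl⟩, hyne, hy0⟩
    have hk00 : k0 ≠ 0 := fun h => hyne (by rw [h])
    set Q : ℕ → Prop := fun j => φ 1 (x (j : Fin (n + 1))) = x 0 with hQ
    have hφm : φ 1 (μ 1) = μ 1 := hretr 1 1 le_rfl
    have hQk0 : Q k0.val := by simpa [hQ, Fin.cast_val_eq_self] using hy0
    have hQm : ¬ Q m.val := by
      simp only [hQ, Fin.cast_val_eq_self, hm, hφm]; exact hμ1ne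
    have hk0m : k0.val ≠ m.val := fun h => hQm (h ▸ hQk0)
    -- find adjacent indices where Q changes
    have key : ∃ j : ℕ, 1 ≤ j ∧ j + 1 ≤ n ∧ ¬ (Q j ↔ Q (j + 1)) := by
      have hk0v : 1 ≤ k0.val ∧ k0.val ≤ n := by
        have := k0.isLt; have : k0.val ≠ 0 := fun h => hk00 (Fin.ext h); omega
      have hmv : 1 ≤ m.val ∧ m.val ≤ n := by
        have := m.isLt; have : m.val ≠ 0 := fun h => hm0 (Fin.ext h); omega
      rcases lt_or_gt_of_ne hk0m with hlt | hlt
      · by_contra hcon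
        push_neg at hcon
        exact hQm ((chain_iff Q k0.val m.val hlt.le
          (fun j hj hjb => hcon j (by omega) (by omega))).mp hQk0)
      · by_contra hcon
        push_neg at hcon
        exact hQm ((chain_iff Q m.val k0.val hlt.le
          (fun j hj hjb => hcon j (by omega) (by omega))).mpr hQk0)
    obtain ⟨j, hj1, hjn, hjQ⟩ := key
    set jf : Fin (n + 1) := (j : Fin (n + 1)) with hjf
    set j1f : Fin (n + 1) := ((j + 1 : ℕ) : Fin (n + 1)) with hj1f
    have hjfv : jf.val = j := Fin.val_cast_of_lt (by omega)
    have hj1fv : j1f.val = j + 1 := Fin.val_cast_of_lt (by omega)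
    have hjf0 : jf ≠ 0 := fun h => by rw [h] at hjfv; simp at hjfv; omega
    have hj1f0 : j1f ≠ 0 := fun h => by rw [h] at hj1fv; simp at hj1fv
    have hdist1 : dist (x jf) (x j1f) = 1 := by
      rw [hd jf j1f hjf0 hj1f0, hjfv, hj1fv]
      have hab : ((j : ℤ) - ((j + 1 : ℕ) : ℤ)).natAbs = 1 := by push_cast; omega
      rw [hab]
      have : (10 : ℝ) ≤ (n : ℝ) := by exact_mod_cast hn
      push_cast
      rw [min_eq_left (by linarith)]
    -- exactly one of Q j, Q (j+1) holds
    have hdistn : dist (φ 1 (x jf)) (φ 1 (x j1f)) = (n : ℝ) := by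
      by_cases hQj : Q j
      · have hQj1 : ¬ Q (j + 1) := fun h => hjQ ⟨fun _ => h, fun _ => hQj⟩
        have h2 : φ 1 (x j1f) = μ 1 := (hdich j1f).resolve_left hQj1
        rw [show φ 1 (x jf) = x 0 from hQj, h2]; exact hdist0μ
      · have hQj1 : Q (j + 1) := by
          by_contra h; exact hjQ ⟨fun a => absurd a hQj, fun a => absurd a h⟩
        have h2 : φ 1 (x jf) = μ 1 := (hdich jf).resolve_left hQj
        rw [h2, show φ 1 (x j1f) = x 0 from hQj1, dist_comm]; exact hdist0μ
    exact ⟨x jf, ⟨jf, rfl⟩, x j1f, ⟨j1f, rfl⟩, hdist1, hdistn,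
      by rw [hdist1, hdistn, mul_one]⟩
  refine ⟨main, ?_⟩
  intro K hK hLip y hy hyne
  obtain ⟨k, rfl⟩ := hy
  rcases hdich k with h0 | h1
  · exfalso
    obtain ⟨w, hw, z, hz, hd1, hdn, _⟩ := main ⟨x k, ⟨k, rfl⟩, hyne, h0⟩
    have := (hLip 1).dist_le_mul w hw z hz
    rw [hd1, hdn, mul_one] at this
    linarith
  · exact h1
end

section
/- Let N = ⋃_{n=1}^∞ C_{4^n}^0 with the metric defined circle-wise (d(x,y) = d_n(x,y) within C_{4^n}^0, and d(x,y) = max{4^i,4^j} across distinct circles C_{4^i}, C_{4^j}). Then for every commuting system of retractions φ_i : N → N (with |φ_i(N)| = i+1, φ_0(N) = {0}, φ_j φ_i = φ_i φ_j = φ_i for i ≤ j, images nested and their union equal to N), sup_i Lip(φ_i) = ∞. In particular, for every k ≥ 4 there is an index n_k with Lip(φ_{n_k}) ≥ k. -/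
/-- The union `N = ⋃_{n ≥ 1} C_{4^n}^0` of concentric graph circles, encoded as a subset
of `ℕ × ℕ`: the centre is `(0,0)` and the point `x_i` of the circle of radius `4^n`
(for `1 ≤ i ≤ 4^n`, `n ≥ 1`) is `(n, i)`. -/
def ucSet : Set (ℕ × ℕ) :=
  {p | p = (0, 0) ∨ (1 ≤ p.1 ∧ 1 ≤ p.2 ∧ p.2 ≤ 4 ^ p.1)}

/-- The metric on `N`: graph-circle distance within a circle of radius `4^n`,
distance to the centre equal to the radius, and `max {4^i, 4^j}` across circles. -/
noncomputable def ucDist (p q : ℕ × ℕ) : ℝ :=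
  if p = q then 0
  else if p = (0, 0) ∨ q = (0, 0) then (4 : ℝ) ^ max p.1 q.1
  else if p.1 = q.1 then
    min ((((p.2 : ℤ) - (q.2 : ℤ)).natAbs : ℝ))
      ((4 : ℝ) ^ p.1 - (((p.2 : ℤ) - (q.2 : ℤ)).natAbs : ℝ))
  else max ((4 : ℝ) ^ p.1) ((4 : ℝ) ^ q.1)

namespace UCAux

variable {L : ℕ}

def iota (L : ℕ) (z : ZMod L) : ℤ := if 2 * z.val ≤ L then (z.val : ℤ) else (z.val : ℤ) - L

def dc (L : ℕ) (x y : ZMod L) : ℕ := (iota L (x - y)).natAbs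

lemma val_cast_self [NeZero L] (x : ZMod L) : ((x.val : ℕ) : ZMod L) = x :=
  ZMod.natCast_rightInverse x

lemma iota_cast [NeZero L] (z : ZMod L) : ((iota L z : ℤ) : ZMod L) = z := by
  unfold iota
  split
  · rw [Int.cast_natCast, val_cast_self]
  · rw [Int.cast_sub, Int.cast_natCast, Int.cast_natCast, val_cast_self, ZMod.natCast_self,
      sub_zero]

lemma two_natAbs_iota_le [NeZero L] (z : ZMod L) : 2 * (iota L z).natAbs ≤ L := by
  have h := ZMod.val_lt z
  unfold iota
  split <;> omega

lemma minrep [NeZero L] (z : ZMod L) (t : ℤ) (ht : (t : ZMod L) = z) :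
    (iota L z).natAbs ≤ t.natAbs := by
  have hdvd : (L : ℤ) ∣ (t - iota L z) := by
    rw [← ZMod.intCast_zmod_eq_zero_iff_dvd, Int.cast_sub, ht, iota_cast, sub_self]
  obtain ⟨c, hc⟩ := hdvd
  have h2 := two_natAbs_iota_le z
  rcases eq_or_ne c 0 with rfl | hne
  · simp at hc; omega
  · have h3 : (t - iota L z).natAbs = L * c.natAbs := by
      rw [hc, Int.natAbs_mul]; simp
    have h4 : 1 ≤ c.natAbs := by omega
    have h5 : L * 1 ≤ L * c.natAbs := Nat.mul_le_mul_left L h4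
    omega

lemma dc_self [NeZero L] (x : ZMod L) : dc L x x = 0 := by
  simp [dc, iota, ZMod.val_zero]

lemma dc_comm [NeZero L] (x y : ZMod L) : dc L x y = dc L y x := by
  have h : ∀ u v : ZMod L, dc L u v ≤ dc L v u := by
    intro u v
    have := minrep (u - v) (-(iota L (v - u))) (by rw [Int.cast_neg, iota_cast]; ring)
    rwa [Int.natAbs_neg] at this
  exact le_antisymm (h x y) (h y x)

lemma dc_triangle [NeZero L] (x y z : ZMod L) : dc L x z ≤ dc L x y + dc L y z := by
  have h := minrep (x - z) (iota L (x - y) + iota L (y - z))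
    (by rw [Int.cast_add, iota_cast, iota_cast]; ring)
  exact le_trans h (Int.natAbs_add_le _ _)

lemma iota_natCast [NeZero L] (a : ℕ) (h1 : a < L) (h2 : 2 * a ≤ L) :
    iota L ((a : ℕ) : ZMod L) = (a : ℤ) := by
  unfold iota
  rw [ZMod.val_cast_of_lt h1, if_pos h2]

lemma iota_spec [NeZero L] (z : ZMod L) : (iota L z).natAbs = min z.val (L - z.val) := by
  have := ZMod.val_lt z
  unfold iota
  split <;> omega

lemma natAbs_iota_le_sub [NeZero L] (z : ZMod L) : (iota L z).natAbs ≤ L - z.val := by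
  have := ZMod.val_lt z
  unfold iota
  split <;> omega

lemma natAbs_iota_le_val [NeZero L] (z : ZMod L) : (iota L z).natAbs ≤ z.val := by
  have := ZMod.val_lt z
  unfold iota
  split <;> omega

lemma telescope [NeZero L] (G : ZMod L → ℤ) : ∑ x : ZMod L, (G (x + 1) - G x) = 0 := by
  rw [Finset.sum_sub_distrib]
  rw [show ∑ x : ZMod L, G (x + 1) = ∑ x : ZMod L, G x by
    simpa using Equiv.sum_comp (Equiv.addRight (1 : ZMod L)) G]
  exact sub_self _

lemma cycle_cross [NeZero L] (P : ZMod L → Prop) {a b : ZMod L} (ha : P a) (hb : ¬ P b) :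
    ∃ x, P x ∧ ¬ P (x + 1) := by
  by_contra h
  push_neg at h
  have key : ∀ n : ℕ, P (a + n) := by
    intro n
    induction n with
    | zero => simpa using ha
    | succ m ih =>
      have := h _ ih
      rwa [add_assoc, show ((m : ZMod L) + 1) = ((m + 1 : ℕ) : ZMod L) by push_cast; ring] at this
  have : P b := by
    have := key ((b - a).val)
    rwa [val_cast_self, add_sub_cancel] at this
  exact hb this

lemma dc_eq_min [NeZero L] (x y : ZMod L) :
    dc L x y = min (((x.val : ℤ) - (y.val : ℤ)).natAbs)
      (L - ((x.val : ℤ) - (y.val : ℤ)).natAbs) := by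
  have hx := ZMod.val_lt x
  have hy := ZMod.val_lt y
  have hspec : dc L x y = min (x - y).val (L - (x - y).val) := iota_spec _
  rcases le_or_gt y.val x.val with h | h
  · have hv : (x - y).val = x.val - y.val := by
      have hc : ((x.val - y.val : ℕ) : ZMod L) = x - y := by
        rw [Nat.cast_sub h, val_cast_self, val_cast_self]
      rw [← hc, ZMod.val_cast_of_lt (by omega)]
    rw [hspec, hv]
    omega
  · have hv : (x - y).val = L - (y.val - x.val) := by
      have hc : ((L - (y.val - x.val) : ℕ) : ZMod L) = x - y := by
        rw [Nat.cast_sub (by omega), Nat.cast_sub (by omega), val_cast_self, val_cast_self,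
          ZMod.natCast_self, zero_sub, neg_sub]
      rw [← hc, ZMod.val_cast_of_lt (by omega)]
    rw [hspec, hv]
    omega

/-- The point of the circle of radius `4^k` with index `x`. -/
def ePt (k L : ℕ) (x : ZMod L) : ℕ × ℕ := (k, x.val + 1)

lemma ePt_mem {k : ℕ} [NeZero L] (hk : 1 ≤ k) (hLk : L = 4 ^ k) (x : ZMod L) :
    ePt k L x ∈ ucSet := by
  have hv : x.val < L := ZMod.val_lt x
  right
  show 1 ≤ k ∧ 1 ≤ x.val + 1 ∧ x.val + 1 ≤ 4 ^ k
  omega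

lemma ePt_inj [NeZero L] {k : ℕ} {x y : ZMod L} (h : ePt k L x = ePt k L y) : x = y := by
  simp only [ePt, Prod.mk.injEq] at h
  exact ZMod.val_injective L (by omega)

lemma ucDist_ePt {k : ℕ} [NeZero L] (hk : 1 ≤ k) (hLk : L = 4 ^ k) (x y : ZMod L) :
    ucDist (ePt k L x) (ePt k L y) = (dc L x y : ℝ) := by
  rcases eq_or_ne x y with rfl | hne
  · rw [dc_self]
    simp [ucDist]
  · have hxy : ePt k L x ≠ ePt k L y := fun h => hne (ePt_inj h)
    have hx := ZMod.val_lt x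
    have hy := ZMod.val_lt y
    rw [ucDist, if_neg hxy, if_neg (by simp only [ePt, Prod.mk.injEq]; omega),
      if_pos (show (ePt k L x).1 = (ePt k L y).1 from rfl)]
    simp only [ePt]
    have hAB : ((x.val + 1 : ℕ) : ℤ) - ((y.val + 1 : ℕ) : ℤ) = (x.val : ℤ) - (y.val : ℤ) := by
      push_cast; ring
    rw [hAB]
    set c : ℕ := ((x.val : ℤ) - (y.val : ℤ)).natAbs with hc
    have hcL : c < L := by omega
    have h4L : (4 : ℝ) ^ k = (L : ℝ) := by rw [hLk]; push_cast; ring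
    rw [h4L, show (L : ℝ) - (c : ℝ) = ((L - c : ℕ) : ℝ) by
      rw [Nat.cast_sub hcL.le], ← Nat.cast_min]
    rw [dc_eq_min]

lemma ucDist_cross {k : ℕ} [NeZero L] (hk : 1 ≤ k) (z : ZMod L) (q : ℕ × ℕ)
    (hq : q ∈ ucSet) (hq1 : q.1 ≠ k) : (4 : ℝ) ^ k ≤ ucDist (ePt k L z) q := by
  have hne : ePt k L z ≠ q := by
    intro h
    exact hq1 (by rw [← h]; rfl)
  rcases hq with h00 | hcirc
  · rw [ucDist, if_neg hne, if_pos (Or.inr h00), h00]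
    simp [ePt]
  · rw [ucDist, if_neg hne, if_neg ?_, if_neg ?_]
    · exact le_max_left _ _
    · show ¬ (ePt k L z).1 = q.1
      simpa [ePt] using fun h => hq1 h.symm
    · rintro (h | h)
      · exact absurd (congrArg Prod.fst h) (by simp only [ePt]; omega)
      · rw [h] at hcirc
        simp at hcirc

lemma sixteen_sq_le (k : ℕ) (hk : 4 ≤ k) : 16 * k ^ 2 ≤ 4 ^ k := by
  induction k, hk using Nat.le_induction with
  | base => norm_num
  | succ n hn ih =>
    have h1 : 16 * (n + 1) ^ 2 ≤ 4 * (16 * n ^ 2) := by nlinarith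
    calc 16 * (n + 1) ^ 2 ≤ 4 * (16 * n ^ 2) := h1
      _ ≤ 4 * 4 ^ n := Nat.mul_le_mul_left 4 ih
      _ = 4 ^ (n + 1) := by rw [pow_succ]; ring

lemma dvd_diff [NeZero L] {u v : ℤ} (h : ((u : ZMod L)) = (v : ZMod L)) :
    (L : ℤ) ∣ (u - v) := by
  rw [← ZMod.intCast_zmod_eq_zero_iff_dvd, Int.cast_sub, h, sub_self]

/-- The key circle lemma: a map on the `L`-cycle which moves adjacent points'
images at most `k-1` apart, moves every point at most `2k²+2k`, and whose image
avoids the ball of radius `k` around some point `q`, cannot exist (for `L ≥ 16k²`).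
The proof compares two computations of the winding number. -/
lemma cyc (k L : ℕ) [NeZero L] (hk : 1 ≤ k) (hL : 16 * k ^ 2 ≤ L)
    (f : ZMod L → ZMod L) (q : ZMod L)
    (hadj : ∀ x, dc L (f (x + 1)) (f x) ≤ k - 1)
    (hnear : ∀ x, dc L (f x) x ≤ 2 * k ^ 2 + 2 * k)
    (hfar : ∀ x, k ≤ dc L (f x) q) : False := by
  have hkk : k ≤ k ^ 2 := Nat.le_self_pow (by norm_num) k
  have hkL : k ≤ L := by omega
  -- the jump sequence
  set δ : ZMod L → ℤ := fun x => iota L (f (x + 1) - f x) with hδ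
  have hδabs : ∀ x, (δ x).natAbs ≤ k - 1 := hadj
  -- the `q`-cut lift
  set F : ZMod L → ℤ := fun x => ((f x - q).val : ℤ) with hF
  have hFb : ∀ x, 1 ≤ F x ∧ F x ≤ (L : ℤ) - 1 := by
    intro x
    have h1 : (f x - q).val < L := ZMod.val_lt _
    have h2 : (f x - q).val ≠ 0 := by
      intro h0
      have h3 : dc L (f x) q ≤ (f x - q).val := natAbs_iota_le_val _
      have h4 := hfar x
      omega
    constructor <;> simp only [hF] <;> omega
  have hFq : ∀ x, dc L (f x) q ≤ (L : ℤ) - F x := by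
    intro x
    have h0 : dc L (f x) q = (iota L (f x - q)).natAbs := rfl
    have := natAbs_iota_le_sub (f x - q)
    have h1 : (f x - q).val < L := ZMod.val_lt _
    simp only [hF]
    omega
  have hstepA : ∀ x : ZMod L, δ x = F (x + 1) - F x := by
    intro x
    have hdvd : (L : ℤ) ∣ (δ x - (F (x + 1) - F x)) := by
      apply dvd_diff
      simp only [hδ, hF]
      push_cast [iota_cast, val_cast_self]
      ring
    obtain ⟨c, hc⟩ := hdvd
    have hb1 := hFb (x + 1)
    have hb2 := hFb x
    have hd := hδabs x
    have hnab : (δ x - (F (x + 1) - F x)).natAbs = L * c.natAbs := by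
      rw [hc, Int.natAbs_mul]; simp
    have hcsmall : c.natAbs ≤ 1 := by
      by_contra hcc
      have h5 : L * 2 ≤ L * c.natAbs := Nat.mul_le_mul_left L (by omega)
      omega
    have hctri : c = 0 ∨ c = 1 ∨ c = -1 := by omega
    rcases hctri with rfl | rfl | rfl
    · omega
    · -- F x must be close to L, so f x is within k-2 of q
      exfalso
      have h6 := hFq x
      have h7 := hfar x
      omega
    · exfalso
      have h6 := hFq (x + 1)
      have h7 := hfar (x + 1)
      omega
  -- the identity-comparison lift
  set s : ZMod L → ℤ := fun x => iota L (f x - x) with hs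
  have hsabs : ∀ x, (s x).natAbs ≤ 2 * k ^ 2 + 2 * k := hnear
  have hstepB : ∀ x : ZMod L, δ x = s (x + 1) - s x + 1 := by
    intro x
    have hdvd : (L : ℤ) ∣ (δ x - (s (x + 1) - s x + 1)) := by
      apply dvd_diff
      simp only [hδ, hs]
      push_cast [iota_cast, val_cast_self]
      ring
    obtain ⟨c, hc⟩ := hdvd
    have hd := hδabs x
    have hb1 := hsabs (x + 1)
    have hb2 := hsabs x
    have hnab : (δ x - (s (x + 1) - s x + 1)).natAbs = L * c.natAbs := by
      rw [hc, Int.natAbs_mul]; simp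
    have hcz : c.natAbs = 0 := by
      by_contra hcc
      have h5 : L * 1 ≤ L * c.natAbs := Nat.mul_le_mul_left L (by omega)
      omega
    have : c = 0 := by omega
    subst this
    omega
  have hA : ∑ x : ZMod L, δ x = 0 := by
    rw [Finset.sum_congr rfl (fun x _ => hstepA x)]
    exact telescope F
  have hB : ∑ x : ZMod L, δ x = (L : ℤ) := by
    rw [Finset.sum_congr rfl (fun x _ => hstepB x)]
    rw [Finset.sum_add_distrib, telescope s]
    simp [Finset.card_univ, ZMod.card]
  rw [hA] at hB
  have : L = 0 := by exact_mod_cast hB.symm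
  omega

lemma dc_add_cast [NeZero L] (x : ZMod L) (a : ℕ) (h1 : a < L) (h2 : 2 * a ≤ L) :
    dc L (x + (a : ZMod L)) x = a := by
  have h3 : (x + (a : ZMod L)) - x = ((a : ℕ) : ZMod L) := by ring
  unfold dc
  rw [h3, iota_natCast a h1 h2]
  simp

lemma dc_sub_cast [NeZero L] (x : ZMod L) (a : ℕ) (h1 : a < L) (h2 : 2 * a ≤ L) :
    dc L x (x - (a : ZMod L)) = a := by
  have h3 : x - (x - (a : ZMod L)) = ((a : ℕ) : ZMod L) := by ring
  unfold dc
  rw [h3, iota_natCast a h1 h2]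
  simp

lemma dc_pair [NeZero L] (x : ZMod L) (a : ℕ) (h1 : 2 * a < L) (h2 : 4 * a ≤ L) :
    dc L (x + (a : ZMod L)) (x - (a : ZMod L)) = 2 * a := by
  have h3 : (x + (a : ZMod L)) - (x - (a : ZMod L)) = ((2 * a : ℕ) : ZMod L) := by
    push_cast; ring
  unfold dc
  rw [h3, iota_natCast (2 * a) h1 (by omega)]
  omega

end UCAux

open UCAux

/-- every commuting system of retractions on `N = ⋃ C_{4^n}^0`
(with nested images `{μ 0, ..., μ i}` exhausting `N`, `μ 0 = (0,0)`) has unbounded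
Lipschitz constants: for every `k ≥ 4` some `φ n` expands a pair of points by a
factor of at least `k`. -/
theorem union_circles_no_uniform_retractions
    (μ : ℕ → ℕ × ℕ) (hμ0 : μ 0 = (0, 0)) (hμmem : ∀ i, μ i ∈ ucSet)
    (hμinj : Function.Injective μ) (hμsurj : ∀ p ∈ ucSet, ∃ i, μ i = p)
    (φ : ℕ → ℕ × ℕ → ℕ × ℕ)
    (hmaps : ∀ n, ∀ p ∈ ucSet, ∃ j ≤ n, φ n p = μ j)
    (hretr : ∀ n j, j ≤ n → φ n (μ j) = μ j)
    (hcomm : ∀ n m, n ≤ m → ∀ p ∈ ucSet,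
      φ m (φ n p) = φ n p ∧ φ n (φ m p) = φ n p) :
    ∀ k : ℕ, 4 ≤ k → ∃ n, ∃ a ∈ ucSet, ∃ b ∈ ucSet, a ≠ b ∧
      (k : ℝ) * ucDist a b ≤ ucDist (φ n a) (φ n b) := by
  intro k hk
  by_contra hcon
  push_neg at hcon
  classical
  have hk1 : 1 ≤ k := by omega
  have hkk : k ≤ k ^ 2 := Nat.le_self_pow (by norm_num) k
  have hL16 : 16 * k ^ 2 ≤ 4 ^ k := sixteen_sq_le k hk
  have hLpos : 0 < 4 ^ k := pow_pos (by norm_num) k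
  haveI : NeZero (4 ^ k) := ⟨by omega⟩
  have hkL : k < 4 ^ k := by omega
  have hmem : ∀ x : ZMod (4 ^ k), ePt k (4 ^ k) x ∈ ucSet := fun x => ePt_mem hk1 rfl x
  have hbr : ∀ x y : ZMod (4 ^ k),
      ucDist (ePt k (4 ^ k) x) (ePt k (4 ^ k) y) = (dc (4 ^ k) x y : ℝ) :=
    fun x y => ucDist_ePt hk1 rfl x y
  have hone : ∀ x : ZMod (4 ^ k), dc (4 ^ k) (x + 1) x = 1 := by
    intro x
    have h := dc_add_cast (L := 4 ^ k) x 1 (by omega) (by omega)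
    rwa [Nat.cast_one] at h
  have hEne : ∀ x : ZMod (4 ^ k), ePt k (4 ^ k) x ≠ ePt k (4 ^ k) (x + 1) := by
    intro x h
    have h2 := ePt_inj h
    have h3 : (1 : ZMod (4 ^ k)) = 0 := left_eq_add.mp h2
    have h5 : ((1 : ℕ) : ZMod (4 ^ k)).val = 1 := ZMod.val_cast_of_lt (by omega)
    rw [Nat.cast_one, h3, ZMod.val_zero] at h5
    omega
  -- the predicate: `{μ 0, ..., μ n}` is a `2k`-net of the circle of radius `4^k`
  let T : ℕ → Prop := fun n => ∀ x : ZMod (4 ^ k),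
    ∃ j, j ≤ n ∧ ∃ y, μ j = ePt k (4 ^ k) y ∧ dc (4 ^ k) x y ≤ 2 * k
  have hTex : ∃ n, T n := by
    have hx : ∀ x : ZMod (4 ^ k), ∃ j, μ j = ePt k (4 ^ k) x := fun x => hμsurj _ (hmem x)
    choose ix hix using hx
    exact ⟨Finset.univ.sup ix, fun x =>
      ⟨ix x, Finset.le_sup (Finset.mem_univ x), x, hix x, by rw [dc_self]; omega⟩⟩
  set n₀ := Nat.find hTex with hn₀def
  have hT : T n₀ := Nat.find_spec hTex
  have hn₀ : n₀ ≠ 0 := by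
    intro h0
    obtain ⟨j, hj, y, hy, -⟩ := hT (0 : ZMod (4 ^ k))
    rw [h0] at hj
    have hj0 : j = 0 := by omega
    rw [hj0, hμ0] at hy
    have h1 : (0 : ℕ) = k := congrArg Prod.fst hy
    omega
  have hTnot : ¬ T (n₀ - 1) := Nat.find_min hTex (by omega)
  -- the retraction maps the big circle into itself
  have hC : ∀ x : ZMod (4 ^ k), ∃ z, φ n₀ (ePt k (4 ^ k) x) = ePt k (4 ^ k) z := by
    by_contra hcc
    push_neg at hcc
    obtain ⟨xb, hxb⟩ := hcc
    obtain ⟨j0, hj0, y0, hy0, -⟩ := hT (0 : ZMod (4 ^ k))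
    have hP0 : ∃ z, φ n₀ (ePt k (4 ^ k) y0) = ePt k (4 ^ k) z :=
      ⟨y0, by rw [← hy0]; exact hretr n₀ j0 hj0⟩
    obtain ⟨x, hPx, hPx1⟩ :=
      cycle_cross (fun x => ∃ z, φ n₀ (ePt k (4 ^ k) x) = ePt k (4 ^ k) z) hP0
        (fun hex => by obtain ⟨z, hz⟩ := hex; exact hxb z hz)
    obtain ⟨z, hz⟩ := hPx
    obtain ⟨j, hj, hφj⟩ := hmaps n₀ (ePt k (4 ^ k) (x + 1)) (hmem _)
    have hqmem : φ n₀ (ePt k (4 ^ k) (x + 1)) ∈ ucSet := by rw [hφj]; exact hμmem j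
    have hq1 : (φ n₀ (ePt k (4 ^ k) (x + 1))).1 ≠ k := by
      intro h1
      rcases hqmem with h00 | hci
      · rw [h00] at h1
        have : (0 : ℕ) = k := h1
        omega
      · refine hPx1 ⟨(((φ n₀ (ePt k (4 ^ k) (x + 1))).2 - 1 : ℕ) : ZMod (4 ^ k)), ?_⟩
        obtain ⟨hc1, hc2, hc3⟩ := hci
        rw [h1] at hc3
        have hlt : (φ n₀ (ePt k (4 ^ k) (x + 1))).2 - 1 < 4 ^ k := by omega
        have hval := ZMod.val_cast_of_lt hlt
        refine Prod.ext h1 ?_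
        show _ = ((((φ n₀ (ePt k (4 ^ k) (x + 1))).2 - 1 : ℕ) : ZMod (4 ^ k)).val + 1)
        rw [hval]
        omega
    have hd := hcon n₀ (ePt k (4 ^ k) x) (hmem x) (ePt k (4 ^ k) (x + 1)) (hmem _) (hEne x)
    rw [hz, hbr x (x + 1)] at hd
    have hd1 : dc (4 ^ k) x (x + 1) = 1 := by rw [dc_comm]; exact hone x
    rw [hd1] at hd
    have hlow := ucDist_cross hk1 z (φ n₀ (ePt k (4 ^ k) (x + 1))) hqmem hq1
    have hfin : (4 : ℝ) ^ k < (k : ℝ) := lt_of_le_of_lt hlow (by simpa using hd)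
    have h9 : ((4 ^ k : ℕ) : ℝ) < (k : ℝ) := by push_cast; exact hfin
    have h10 : (4 ^ k : ℕ) < k := by exact_mod_cast h9
    omega
  choose f hf using hC
  -- points of `{μ 0, ..., μ n₀}` on the circle are fixed
  have hfix : ∀ j y, j ≤ n₀ → μ j = ePt k (4 ^ k) y → f y = y := by
    intro j y hj hy
    have h1 : φ n₀ (ePt k (4 ^ k) y) = ePt k (4 ^ k) y := by
      rw [← hy]; exact hretr n₀ j hj
    exact (ePt_inj (by rw [← hf y, h1])).symm
  -- adjacent points have images at distance < k
  have hadj : ∀ x : ZMod (4 ^ k), dc (4 ^ k) (f (x + 1)) (f x) ≤ k - 1 := by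
    intro x
    have hd := hcon n₀ (ePt k (4 ^ k) (x + 1)) (hmem _) (ePt k (4 ^ k) x) (hmem _)
      (fun h => hEne x (h.symm))
    rw [hf, hf, hbr, hbr, hone x] at hd
    have h2 : dc (4 ^ k) (f (x + 1)) (f x) < k := by
      rw [Nat.cast_one, mul_one] at hd
      exact_mod_cast hd
    omega
  -- every point moves at most `2k² + 2k`
  have hnear : ∀ x : ZMod (4 ^ k), dc (4 ^ k) (f x) x ≤ 2 * k ^ 2 + 2 * k := by
    intro x
    obtain ⟨j, hj, y, hy, hdxy⟩ := hT x
    have hfy := hfix j y hj hy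
    rcases eq_or_ne x y with rfl | hxy
    · rw [hfy, dc_self]
      omega
    · have hd := hcon n₀ (ePt k (4 ^ k) x) (hmem _) (ePt k (4 ^ k) y) (hmem _)
        (fun h => hxy (ePt_inj h))
      rw [hf, hf, hbr, hbr] at hd
      have h2 : dc (4 ^ k) (f x) (f y) < k * dc (4 ^ k) x y := by exact_mod_cast hd
      rw [hfy] at h2
      have h3 := dc_triangle (f x) y x
      have h4 : k * dc (4 ^ k) x y ≤ k * (2 * k) := Nat.mul_le_mul_left k hdxy
      have h5 : k * (2 * k) = 2 * k ^ 2 := by ring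
      have h6 := dc_comm y x
      omega
  -- the far point
  obtain ⟨x₀, hx₀⟩ : ∃ x : ZMod (4 ^ k), ∀ j, j ≤ n₀ - 1 → ∀ y,
      μ j = ePt k (4 ^ k) y → 2 * k < dc (4 ^ k) x y := by
    by_contra hcc
    push_neg at hcc
    exact hTnot fun x => by
      obtain ⟨j, hj, y, hy, hdd⟩ := hcc x
      exact ⟨j, hj, y, hy, hdd⟩
  have h2k : 2 * k ≤ 4 ^ k := by omega
  have h2kl : 2 * k < 4 ^ k := by omega
  have h4k : 4 * k ≤ 4 ^ k := by omega
  have hdx₁ : dc (4 ^ k) x₀ (x₀ + ((k : ℕ) : ZMod (4 ^ k))) = k := by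
    rw [dc_comm]; exact dc_add_cast x₀ k hkL h2k
  have hdx₂ : dc (4 ^ k) x₀ (x₀ - ((k : ℕ) : ZMod (4 ^ k))) = k := dc_sub_cast x₀ k hkL h2k
  have hdq : dc (4 ^ k) (x₀ + ((k : ℕ) : ZMod (4 ^ k))) (x₀ - ((k : ℕ) : ZMod (4 ^ k)))
      = 2 * k := dc_pair x₀ k h2kl h4k
  have himg : ∀ x : ZMod (4 ^ k), ∃ j, j ≤ n₀ ∧ μ j = ePt k (4 ^ k) (f x) := by
    intro x
    obtain ⟨j, hj, he⟩ := hmaps n₀ (ePt k (4 ^ k) x) (hmem x)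
    exact ⟨j, hj, by rw [← he, hf]⟩
  have hfarpt : ∀ qq : ZMod (4 ^ k), dc (4 ^ k) x₀ qq = k → ∀ x : ZMod (4 ^ k),
      (∃ j, j ≤ n₀ - 1 ∧ μ j = ePt k (4 ^ k) (f x)) → k ≤ dc (4 ^ k) (f x) qq := by
    rintro qq hqq x ⟨j, hj, he⟩
    have h1 : 2 * k < dc (4 ^ k) x₀ (f x) := hx₀ j hj (f x) he
    have h2 := dc_triangle x₀ qq (f x)
    have h3 := dc_comm qq (f x)
    omega
  have key : ∃ q : ZMod (4 ^ k), ∀ x, k ≤ dc (4 ^ k) (f x) q := by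
    by_cases hw : ∃ w, μ n₀ = ePt k (4 ^ k) w
    · obtain ⟨w, hweq⟩ := hw
      have hwor : k ≤ dc (4 ^ k) (x₀ + ((k : ℕ) : ZMod (4 ^ k))) w ∨
          k ≤ dc (4 ^ k) (x₀ - ((k : ℕ) : ZMod (4 ^ k))) w := by
        have ht := dc_triangle (x₀ + ((k : ℕ) : ZMod (4 ^ k))) w
          (x₀ - ((k : ℕ) : ZMod (4 ^ k)))
        have hcm := dc_comm w (x₀ - ((k : ℕ) : ZMod (4 ^ k)))
        omega
      rcases hwor with hqs | hqs
      · refine ⟨x₀ + ((k : ℕ) : ZMod (4 ^ k)), fun x => ?_⟩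
        obtain ⟨j, hj, he⟩ := himg x
        by_cases hjn : j = n₀
        · have hwf : w = f x := ePt_inj (hweq.symm.trans (hjn ▸ he))
          rw [← hwf, dc_comm]
          exact hqs
        · exact hfarpt _ hdx₁ x ⟨j, by omega, he⟩
      · refine ⟨x₀ - ((k : ℕ) : ZMod (4 ^ k)), fun x => ?_⟩
        obtain ⟨j, hj, he⟩ := himg x
        by_cases hjn : j = n₀
        · have hwf : w = f x := ePt_inj (hweq.symm.trans (hjn ▸ he))
          rw [← hwf, dc_comm]
          exact hqs
        · exact hfarpt _ hdx₂ x ⟨j, by omega, he⟩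
    · refine ⟨x₀ + ((k : ℕ) : ZMod (4 ^ k)), fun x => ?_⟩
      obtain ⟨j, hj, he⟩ := himg x
      have hjn : j ≠ n₀ := fun h => hw ⟨f x, by rw [← h]; exact he⟩
      exact hfarpt _ hdx₁ x ⟨j, by omega, he⟩
  obtain ⟨q, hq⟩ := key
  exact cyc k (4 ^ k) hk1 hL16 f q hadj hnear hq
end

section
/- Let M be a metric space, and suppose there are points μ_0 = 0, μ_1, μ_2, ... and commuting retractions φ_n : M → M with φ_n(M) = {μ_0,...,μ_n}, dense union of images, uniform Lipschitz bound K, and φ_m φ_n = φ_n φ_m = φ_n for n ≤ m. Then for every x ∈ {μ_i : i ∈ ℕ} there exists exactly one chain with initial point 0 and final point x; namely, if n is least with φ_i(x) = x for all i ≥ n, the chain is the ordered set T_0^x = ⋃_{i=0}^n {φ_i(x)}. -/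
open scoped NNReal

/-- Two indices `a < b` are consecutive in a chain when `φ (b-1) (μ b) = μ a`. -/
def chainRel {M : Type*} (φ : ℕ → M → M) (μ : ℕ → M) (a b : ℕ) : Prop :=
  a < b ∧ φ (b - 1) (μ b) = μ a

/-- A chain is a finite sequence of indices, consecutive ones related by `chainRel`. -/
def IsChainSeq {M : Type*} (φ : ℕ → M → M) (μ : ℕ → M) (S : List ℕ) : Prop :=
  S.Chain' (chainRel φ μ)

/-- The canonical chain ending at `b`: recurse via the "predecessor" `k (b-1)`. -/
def chainList (k : ℕ → ℕ) : ℕ → List ℕ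
  | 0 => [0]
  | b + 1 => chainList k (min (k b) b) ++ [b + 1]
termination_by b => b
decreasing_by omega

lemma chainList_zero (k : ℕ → ℕ) : chainList k 0 = [0] := by rw [chainList]

lemma chainList_succ (k : ℕ → ℕ) (b : ℕ) :
    chainList k (b + 1) = chainList k (min (k b) b) ++ [b + 1] := by rw [chainList]

lemma chainList_ne_nil (k : ℕ → ℕ) (b : ℕ) : chainList k b ≠ [] := by
  cases b <;> simp [chainList_zero, chainList_succ]

lemma chainList_head? (k : ℕ → ℕ) (b : ℕ) : (chainList k b).head? = some 0 := by
  induction b using Nat.strong_induction_on with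
  | _ b ih =>
    match b with
    | 0 => rw [chainList_zero]; rfl
    | b + 1 =>
      rw [chainList_succ, List.head?_append_of_ne_nil _ (chainList_ne_nil k _)]
      exact ih _ (by omega)

lemma chainList_getLast? (k : ℕ → ℕ) (b : ℕ) : (chainList k b).getLast? = some b := by
  cases b with
  | zero => rw [chainList_zero]; rfl
  | succ b => rw [chainList_succ, List.getLast?_concat]

lemma chainList_mem (k : ℕ → ℕ) (hk1 : ∀ i, k i ≤ i)
    (hmono : ∀ i j, i ≤ j → k i ≤ k j) (hidem : ∀ i, k (k i) = k i) :
    ∀ b, k b = b → ∀ j, (j ∈ chainList k b ↔ k j = j ∧ j ≤ b) := by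
  intro b
  induction b using Nat.strong_induction_on with
  | _ b ih =>
    intro hb j
    match b with
    | 0 =>
      simp only [chainList_zero, List.mem_singleton]
      constructor
      · rintro rfl; exact ⟨hb, le_refl _⟩
      · rintro ⟨h1, h2⟩; omega
    | b + 1 =>
      have hmin : min (k b) b = k b := min_eq_left (hk1 b)
      rw [chainList_succ, List.mem_append, List.mem_singleton, hmin]
      rw [ih (k b) (by have := hk1 b; omega) (hidem b) j]
      constructor
      · rintro (⟨h1, h2⟩ | rfl)
        · exact ⟨h1, by have := hk1 b; omega⟩
        · exact ⟨hb, le_refl _⟩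
      · rintro ⟨h1, h2⟩
        rcases eq_or_lt_of_le h2 with rfl | hlt
        · exact Or.inr rfl
        · left
          refine ⟨h1, ?_⟩
          have : k j ≤ k b := hmono j b (by omega)
          omega

lemma chainList_chain' (R : ℕ → ℕ → Prop) (k : ℕ → ℕ) (hk1 : ∀ i, k i ≤ i)
    (hidem : ∀ i, k (k i) = k i)
    (hR : ∀ b, k (b + 1) = b + 1 → R (k b) (b + 1)) :
    ∀ b, k b = b → (chainList k b).Chain' R := by
  intro b
  induction b using Nat.strong_induction_on with
  | _ b ih =>
    intro hb
    match b with
    | 0 => simp [chainList_zero, List.Chain', List.isChain_singleton]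
    | b + 1 =>
      have hmin : min (k b) b = k b := min_eq_left (hk1 b)
      rw [chainList_succ, List.Chain', List.isChain_append]
      refine ⟨ih _ (by rw [hmin]; have := hk1 b; omega) (by rw [hmin]; exact hidem b), by simp, ?_⟩
      intro x hx y hy
      rw [chainList_getLast?, Option.mem_def, Option.some_inj] at hx
      simp only [List.head?_cons, Option.mem_def, Option.some_inj] at hy
      subst hx; subst hy
      rw [hmin]
      exact hR b hb

lemma chainList_unique (R : ℕ → ℕ → Prop) (k : ℕ → ℕ) (hk1 : ∀ i, k i ≤ i)
    (hidem : ∀ i, k (k i) = k i)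
    (hR0 : ∀ a, ¬ R a 0)
    (hR2 : ∀ a b, k (b + 1) = b + 1 → R a (b + 1) → a = k b) :
    ∀ b, k b = b → ∀ T : List ℕ, T.Chain' R → T.head? = some 0 →
      T.getLast? = some b → T = chainList k b := by
  intro b
  induction b using Nat.strong_induction_on with
  | _ b ih =>
    intro hb T hchain hhead hlast
    rcases T.eq_nil_or_concat with rfl | ⟨T', c, rfl⟩
    · simp at hlast
    have hcb : c = b := by
      simpa [List.concat_eq_append, List.getLast?_concat] using hlast
    subst hcb
    rcases List.eq_nil_or_concat T' with rfl | ⟨T'', a, rfl⟩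
    · -- T = [c]
      simp only [List.concat_eq_append, List.nil_append, List.head?_cons,
        Option.some_inj] at hhead
      subst hhead
      rw [chainList_zero]
      rfl
    · simp only [List.concat_eq_append] at *
      rw [List.Chain', List.isChain_append] at hchain
      obtain ⟨hchain', -, hrel⟩ := hchain
      have hr : R a c := by
        apply hrel a _ c rfl
        rw [List.getLast?_concat]; rfl
      match c, hb, hr with
      | 0, hb, hr => exact absurd hr (hR0 a)
      | b + 1, hb, hr =>
        have ha : a = k b := hR2 a b hb hr
        have hka : k a = a := by rw [ha]; exact hidem b
        have hhead' : ((T'' ++ [a])).head? = some 0 := by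
          rwa [List.head?_append_of_ne_nil _ (by simp)] at hhead
        have hT' : T'' ++ [a] = chainList k a := by
          apply ih a (by have := hk1 b; omega) hka _ hchain' hhead'
          rw [List.getLast?_concat]
        rw [hT', ha, chainList_succ, min_eq_left (hk1 b)]

/-- for a commuting, uniformly Lipschitz system of retractions with dense
union of images, every point `μ p` is joined to the base point `μ 0 = 0` by exactly one
chain; moreover its point set is `T_0^x = {φ i (μ p) : i ≤ n₀}`, where `n₀` is least
with `φ i (μ p) = μ p` for all `i ≥ n₀`. -/
theorem unique_chain_from_zero {M : Type*} [MetricSpace M] (z : M)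
    (μ : ℕ → M) (φ : ℕ → M → M)
    (hμ0 : μ 0 = z) (hμinj : Function.Injective μ)
    (hrange : ∀ n, Set.range (φ n) = μ '' Set.Iic n)
    (hretr : ∀ n k, k ≤ n → φ n (μ k) = μ k)
    (hdense : Dense (Set.range μ))
    (K : ℝ≥0) (hlip : ∀ n, LipschitzWith K (φ n))
    (hcomm : ∀ n m, n ≤ m → ∀ y : M, φ m (φ n y) = φ n y ∧ φ n (φ m y) = φ n y)
    (p : ℕ) (n₀ : ℕ)
    (hn₀ : ∀ i, n₀ ≤ i → φ i (μ p) = μ p)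
    (hleast : ∀ m, m < n₀ → ∃ i, m ≤ i ∧ φ i (μ p) ≠ μ p) :
    ∃ S : List ℕ,
      (IsChainSeq φ μ S ∧ S.head? = some 0 ∧ S.getLast? = some p) ∧
      (∀ T : List ℕ, IsChainSeq φ μ T → T.head? = some 0 → T.getLast? = some p → T = S) ∧
      μ '' {j | j ∈ S} = (fun i => φ i (μ p)) '' Set.Iic n₀ := by
  -- choose k i with μ (k i) = φ i (μ p) and k i ≤ i
  have hmem : ∀ i, ∃ j, j ≤ i ∧ μ j = φ i (μ p) := by
    intro i
    have : φ i (μ p) ∈ Set.range (φ i) := ⟨μ p, rfl⟩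
    rw [hrange i] at this
    obtain ⟨j, hj, hje⟩ := this
    exact ⟨j, hj, hje⟩
  choose k hk1 hk2 using hmem
  -- commutation facts
  have L1 : ∀ i j, i ≤ j → φ i (φ j (μ p)) = φ i (μ p) := fun i j h => (hcomm i j h _).2
  have hfix : ∀ i, φ (k i) (μ p) = μ (k i) := by
    intro i
    have h1 : φ (k i) (φ i (μ p)) = φ (k i) (μ p) := L1 (k i) i (hk1 i)
    rw [← hk2 i, hretr (k i) (k i) (le_refl _)] at h1
    exact h1.symm
  have hidem : ∀ i, k (k i) = k i := by
    intro i
    apply hμinj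
    rw [hk2 (k i), hfix i]
  have hmono : ∀ i j, i ≤ j → k i ≤ k j := by
    intro i j hij
    have h1 : μ (k i) = φ i (μ (k j)) := by
      rw [hk2 i, ← L1 i j hij, hk2 j]
    by_cases h : k j ≤ i
    · rw [hretr i (k j) h] at h1
      exact le_of_eq (hμinj h1)
    · have := hk1 i; omega
  have hkn₀ : k n₀ = p := hμinj (by rw [hk2 n₀, hn₀ n₀ (le_refl _)])
  have hkp : k p = p := by rw [← hkn₀, hidem]
  have hpn₀ : p ≤ n₀ := hkn₀ ▸ hk1 n₀
  -- the key identity: φ b (μ (k (b+1+... ))) ... : for k (b+1) = b+1, φ b (μ (b+1)) = μ (k b)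
  have hRkey : ∀ b, k (b + 1) = b + 1 → φ b (μ (b + 1)) = μ (k b) := by
    intro b hb
    have h1 : μ (b + 1) = φ (b + 1) (μ p) := by
      conv_lhs => rw [← hb]
      exact hk2 (b + 1)
    rw [h1, L1 b (b + 1) (by omega), ← hk2]
  have hR : ∀ b, k (b + 1) = b + 1 → chainRel φ μ (k b) (b + 1) := by
    intro b hb
    refine ⟨by have := hk1 b; omega, ?_⟩
    simpa using hRkey b hb
  have hR0 : ∀ a, ¬ chainRel φ μ a 0 := by
    rintro a ⟨h, -⟩; omega
  have hR2 : ∀ a b, k (b + 1) = b + 1 → chainRel φ μ a (b + 1) → a = k b := by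
    rintro a b hb ⟨-, h⟩
    simp only [Nat.add_sub_cancel] at h
    exact hμinj (h.symm.trans (hRkey b hb))
  refine ⟨chainList k p, ⟨?_, chainList_head? k p, chainList_getLast? k p⟩, ?_, ?_⟩
  · exact chainList_chain' _ k hk1 hidem hR p hkp
  · exact fun T h1 h2 h3 => chainList_unique _ k hk1 hidem hR0 hR2 p hkp T h1 h2 h3
  · ext x
    simp only [Set.mem_image, Set.mem_setOf_eq, Set.mem_Iic]
    constructor
    · rintro ⟨j, hj, rfl⟩
      rw [chainList_mem k hk1 hmono hidem p hkp j] at hj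
      obtain ⟨hj1, hj2⟩ := hj
      refine ⟨j, by omega, ?_⟩
      show φ j (μ p) = μ j
      rw [← hk2 j, hj1]
    · rintro ⟨i, hi, rfl⟩
      refine ⟨k i, ?_, hk2 i⟩
      rw [chainList_mem k hk1 hmono hidem p hkp (k i)]
      exact ⟨hidem i, by rw [← hkn₀]; exact hmono i n₀ hi⟩
end

section
/- Conditionality criterion: Let α, β > 0 and let N be an α-separated metric space with a commuting retraction system {φ_i} (uniformly Lipschitz, nested images {μ_0,...,μ_i}, union dense) inducing Schauder projections P_i on the Lipschitz-free space F(N). Suppose that for every n ≥ n_0 there exist chains S = (μ_0, μ_{k_1}, ..., μ_{k_s}) and T = (μ_0, μ_{l_1}, ..., μ_{l_m}) with d(μ_{k_s}, μ_{l_m}) ≤ β and |S \ T| ≥ n. Then for every n ≥ n_0 there exist a 1-Lipschitz function f vanishing at 0 and signs ε_0, ..., ε_{k_s} ∈ {−1, +1} such that the operator P = Σ_{i=0}^{k_s} ε_i (P_{i+1}^* − P_i^*) on Lip_0(N) satisfies ‖P f‖_{Lip} ≥ α(n−1)/β. Consequently the retractional Schauder basis of F(N) is conditional. -/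
open scoped NNReal

section Aux

variable {N : Type*} (μ : ℕ → N) (φ : ℕ → N → N)

lemma chainRel_phi
    (hretr : ∀ n k, k ≤ n → φ n (μ k) = μ k)
    (hcomm : ∀ n m, n ≤ m → ∀ y : N, φ m (φ n y) = φ n y ∧ φ n (φ m y) = φ n y)
    {p q : ℕ} (h : chainRel φ μ p q) : φ p (μ q) = μ p := by
  obtain ⟨hlt, hφ⟩ := h
  have hp : p ≤ q - 1 := by omega
  have h2 := (hcomm p (q - 1) hp (μ q)).2
  rw [← h2, hφ, hretr p p le_rfl]

lemma chain_retract
    (hretr : ∀ n k, k ≤ n → φ n (μ k) = μ k)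
    (hcomm : ∀ n m, n ≤ m → ∀ y : N, φ m (φ n y) = φ n y ∧ φ n (φ m y) = φ n y) :
    ∀ (S : List ℕ), S.Chain' (chainRel φ μ) → ∀ a, S.getLast? = some a →
      ∀ k ∈ S, φ k (μ a) = μ k ∧ k ≤ a := by
  intro S
  induction S using List.reverseRecOn with
  | nil => intro _ a ha; simp at ha
  | append_singleton L x ih =>
    intro hch a ha k hk
    rw [List.getLast?_concat] at ha
    obtain rfl : x = a := by injection ha
    rcases List.mem_append.mp hk with hkL | hkx
    · have hL : L ≠ [] := List.ne_nil_of_mem hkL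
      have hL' : L.getLast? = some (L.getLast hL) := List.getLast?_eq_getLast hL
      set a' := L.getLast hL with ha'
      obtain ⟨hch1, _, hch3⟩ := List.isChain_append.mp hch
      have hrel : chainRel φ μ a' x := hch3 a' hL' x rfl
      obtain ⟨h1, h2⟩ := ih hch1 a' hL' k hkL
      have hax : φ a' (μ x) = μ a' := chainRel_phi μ φ hretr hcomm hrel
      constructor
      · have hc := (hcomm k a' h2 (μ x)).2
        rw [← hc, hax, h1]
      · exact h2.trans (le_of_lt hrel.1)
    · have : k = x := by simpa using hkx
      subst this
      exact ⟨hretr k k le_rfl, le_rfl⟩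

lemma chain_pred {α : Type*} {R : α → α → Prop} :
    ∀ (L : List α), L.Chain' R → ∀ h, L.head? = some h → ∀ k ∈ L,
      k = h ∨ ∃ k' ∈ L, R k' k := by
  intro L
  induction L with
  | nil => intro _ h hh; simp at hh
  | cons x rest ih =>
    intro hch h hh k hk
    obtain rfl : x = h := by simpa using hh
    rcases List.mem_cons.mp hk with rfl | hk'
    · exact Or.inl rfl
    · cases rest with
      | nil => simp at hk'
      | cons y rest' =>
        have hxy : R x y := (List.isChain_cons_cons.mp hch).1
        have hch2 : (y :: rest').Chain' R := (List.isChain_cons_cons.mp hch).2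
        rcases ih hch2 y rfl k hk' with rfl | ⟨k', hk'', hRk⟩
        · exact Or.inr ⟨x, List.mem_cons_self, hxy⟩
        · exact Or.inr ⟨k', List.mem_cons_of_mem x hk'', hRk⟩

lemma chain_walk
    (hretr : ∀ n k, k ≤ n → φ n (μ k) = μ k)
    (hcomm : ∀ n m, n ≤ m → ∀ y : N, φ m (φ n y) = φ n y ∧ φ n (φ m y) = φ n y)
    (T : List ℕ) (hch : T.Chain' (chainRel φ μ)) (b : ℕ)
    (hb : T.getLast? = some b) (h0 : T.head? = some 0) :
    ∀ i, ∃ l ∈ T, l ≤ i ∧ φ i (μ b) = μ l := by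
  have hbT : b ∈ T := by
    have hne : T ≠ [] := by rintro rfl; simp at hb
    have := List.getLast?_eq_getLast hne
    rw [this] at hb
    injection hb with hb'
    rw [← hb']
    exact List.getLast_mem hne
  suffices H : ∀ d i, b ≤ i + d → ∃ l ∈ T, l ≤ i ∧ φ i (μ b) = μ l by
    intro i; exact H b i (by omega)
  intro d
  induction d with
  | zero => intro i hi; exact ⟨b, hbT, by omega, hretr i b (by omega)⟩
  | succ d ihd =>
    intro i hi
    by_cases hbi : b ≤ i
    · exact ⟨b, hbT, hbi, hretr i b hbi⟩
    · obtain ⟨l, hlT, hl, heq⟩ := ihd (i + 1) (by omega)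
      have step : φ i (μ b) = φ i (μ l) := by
        have hc := (hcomm i (i + 1) (Nat.le_succ i) (μ b)).2
        rw [← hc, heq]
      rcases Nat.lt_or_ge l (i + 1) with hli | hli
      · exact ⟨l, hlT, by omega, by rw [step, hretr i l (by omega)]⟩
      · have hl1 : l = i + 1 := by omega
        rcases chain_pred T hch 0 h0 l hlT with rfl | ⟨l', hl'T, hrel⟩
        · omega
        · have hrel1 : l' < l := hrel.1
          refine ⟨l', hl'T, by omega, ?_⟩
          have h2 : φ i (μ l) = μ l' := by
            have := hrel.2
            rwa [show l - 1 = i by omega] at this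
          rw [step, h2]

lemma tv_one (c : ℕ → ℝ) {p q : ℕ} (h : p ≤ q) :
    |c q - c p| ≤ ∑ i ∈ Finset.Ico p q, |c (i + 1) - c i| := by
  have key : ∑ i ∈ Finset.Ico p q, (c (i + 1) - c i) = c q - c p := by
    rw [Finset.sum_Ico_eq_sub _ h, Finset.sum_range_sub, Finset.sum_range_sub]
    ring
  rw [← key]
  exact Finset.abs_sum_le_sum_abs _ _

lemma tv_chain (c : ℕ → ℝ) (p : ℕ → ℕ) (hp : Monotone p) (r : ℕ) :
    ∑ t ∈ Finset.range r, |c (p (t + 1)) - c (p t)| ≤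
      ∑ i ∈ Finset.Ico (p 0) (p r), |c (i + 1) - c i| := by
  induction r with
  | zero => simp
  | succ r ih =>
    rw [Finset.sum_range_succ,
      ← Finset.sum_Ico_consecutive _ (hp (Nat.zero_le r)) (hp (Nat.le_succ r))]
    exact add_le_add ih (tv_one c (hp (Nat.le_succ r)))

end Aux

/-- conditionality criterion: let `N` be `α`-separated with a commuting,
uniformly Lipschitz retraction system `φ i` (images `{μ 0, ..., μ i}`, dense union).
If for every `n ≥ n₀` there are chains `S, T` starting at `μ 0 = 0` whose final points
are `β`-close and with `|S \ T| ≥ n`, then for every `n ≥ n₀` there are a `1`-Lipschitz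
function `f` vanishing at `0` and signs `ε 0, ..., ε m ∈ {±1}` such that the operator
`P = Σ_{i ≤ m} ε i (P_{i+1}^* - P_i^*)`, i.e. `P f = Σ ε i (f ∘ φ (i+1) - f ∘ φ i)`,
has Lipschitz norm at least `α (n-1) / β`. (Hence the retractional basis is
conditional.) -/
theorem conditionality_criterion {N : Type*} [MetricSpace N] (z : N)
    (α β : ℝ) (hα : 0 < α) (hβ : 0 < β)
    (hsep : ∀ x y : N, x ≠ y → α ≤ dist x y)
    (μ : ℕ → N) (φ : ℕ → N → N)
    (hμ0 : μ 0 = z) (hμinj : Function.Injective μ)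
    (hrange : ∀ n, Set.range (φ n) = μ '' Set.Iic n)
    (hretr : ∀ n k, k ≤ n → φ n (μ k) = μ k)
    (hdense : Dense (Set.range μ))
    (K : ℝ≥0) (hlip : ∀ i, LipschitzWith K (φ i))
    (hcomm : ∀ n m, n ≤ m → ∀ y : N, φ m (φ n y) = φ n y ∧ φ n (φ m y) = φ n y)
    (n₀ : ℕ)
    (hchains : ∀ n, n₀ ≤ n → ∃ S T : List ℕ,
      IsChainSeq φ μ S ∧ IsChainSeq φ μ T ∧
      S.head? = some 0 ∧ T.head? = some 0 ∧
      (∃ a b : ℕ, S.getLast? = some a ∧ T.getLast? = some b ∧ dist (μ a) (μ b) ≤ β) ∧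
      n ≤ (S.filter fun a => decide (a ∉ T)).length) :
    ∀ n, n₀ ≤ n → ∃ f : N → ℝ, LipschitzWith 1 f ∧ f z = 0 ∧
      ∃ (m : ℕ) (ε : ℕ → ℝ), (∀ i, ε i = 1 ∨ ε i = -1) ∧
        ∃ u v : N, u ≠ v ∧
          α * ((n : ℝ) - 1) / β * dist u v ≤
            |(∑ i ∈ Finset.range (m + 1), ε i * (f (φ (i + 1) u) - f (φ i u))) -
              (∑ i ∈ Finset.range (m + 1), ε i * (f (φ (i + 1) v) - f (φ i v)))| := by
  classical
  intro n hn
  rcases Nat.lt_or_ge n 2 with h1 | h2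
  · -- trivial case n ≤ 1
    refine ⟨fun _ => 0, ?_, rfl, 0, fun _ => 1, fun _ => Or.inl rfl, μ 0, μ 1, ?_, ?_⟩
    · exact LipschitzWith.of_dist_le_mul (fun x y => by
        simp [dist_self])
    · intro h
      exact absurd (hμinj h) (by norm_num)
    · simp only [sub_zero, mul_zero, Finset.sum_const_zero, abs_zero]
      have hle : α * ((n : ℝ) - 1) / β ≤ 0 := by
        apply div_nonpos_of_nonpos_of_nonneg _ hβ.le
        apply mul_nonpos_of_nonneg_of_nonpos hα.le
        have : (n : ℝ) ≤ 1 := by exact_mod_cast Nat.lt_succ_iff.mp h1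
        linarith
      exact mul_nonpos_of_nonpos_of_nonneg hle dist_nonneg
  · obtain ⟨S, T, hS, hT, hS0, hT0, ⟨a, b, hSa, hTb, hdab⟩, hlen⟩ := hchains n hn
    set W : List ℕ := S.filter (fun k => decide (k ∉ T)) with hW
    have hWlen : n ≤ W.length := hlen
    have hSlt : S.Chain' (· < ·) := List.IsChain.imp (fun a b h => h.1) hS
    have hSpair : S.Pairwise (· < ·) := List.isChain_iff_pairwise.mp hSlt
    have hWpair : W.Pairwise (· < ·) := List.Pairwise.sublist (List.filter_sublist (l := S)) hSpair
    set g : ℕ → ℕ := fun t => W.getD t 0 with hg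
    have hgmem : ∀ t, t < W.length → g t ∈ W := by
      intro t ht
      have : g t = W.get ⟨t, ht⟩ := by rw [hg]; simp only [List.getD_eq_getElem?_getD, List.get_eq_getElem, List.getElem?_eq_getElem ht, Option.getD_some]
      rw [this]
      exact List.get_mem W ⟨t, ht⟩
    have hWS : ∀ k ∈ W, k ∈ S ∧ k ∉ T := by
      intro k hk
      have := List.mem_filter.mp hk
      exact ⟨this.1, by simpa using this.2⟩
    have hgstrict : ∀ i j, i < j → j < W.length → g i < g j := by
      intro i j hij hj
      have h := (List.pairwise_iff_get.mp hWpair) ⟨i, by omega⟩ ⟨j, hj⟩ hij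
      have e1 : g i = W.get ⟨i, by omega⟩ := by rw [hg]; simp only [List.getD_eq_getElem?_getD, List.get_eq_getElem, List.getElem?_eq_getElem (show i < W.length by omega), Option.getD_some]
      have e2 : g j = W.get ⟨j, hj⟩ := by rw [hg]; simp only [List.getD_eq_getElem?_getD, List.get_eq_getElem, List.getElem?_eq_getElem hj, Option.getD_some]
      rw [e1, e2]; exact h
    have hgmono : ∀ i j, i ≤ j → j < W.length → g i ≤ g j := by
      intro i j hij hj
      rcases Nat.lt_or_ge i j with h | h
      · exact le_of_lt (hgstrict i j h hj)
      · have : i = j := by omega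
        subst this; exact le_rfl
    -- the function f
    set f : N → ℝ :=
      fun x => if (∃ t, 2 * t + 1 ≤ W.length ∧ x = μ (g (2 * t))) then α else 0 with hf
    have hf01 : ∀ x, f x = 0 ∨ f x = α := by
      intro x
      by_cases h : (∃ t, 2 * t + 1 ≤ W.length ∧ x = μ (g (2 * t)))
      · right; simp only [hf, if_pos h]
      · left; simp only [hf, if_neg h]
    have hfval_even : ∀ t, t < W.length → Even t → f (μ (g t)) = α := by
      intro t ht ⟨c', hc'⟩
      have hex : ∃ t', 2 * t' + 1 ≤ W.length ∧ μ (g t) = μ (g (2 * t')) :=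
        ⟨c', by omega, by rw [show 2 * c' = t by omega]⟩
      simp only [hf, if_pos hex]
    have hfnot : ∀ k, (¬ ∃ t, 2 * t + 1 ≤ W.length ∧ k = g (2 * t)) → f (μ k) = 0 := by
      intro k hk
      have hex : ¬ ∃ t, 2 * t + 1 ≤ W.length ∧ μ k = μ (g (2 * t)) := by
        rintro ⟨t, ht1, ht2⟩
        exact hk ⟨t, ht1, hμinj ht2⟩
      simp only [hf, if_neg hex]
    have hfval_odd : ∀ t, t < W.length → ¬ Even t → f (μ (g t)) = 0 := by
      intro t ht hodd
      apply hfnot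
      rintro ⟨t', ht1, ht2⟩
      have hne : t ≠ 2 * t' := by
        rintro rfl
        exact hodd ⟨t', by omega⟩
      rcases Nat.lt_or_ge t (2 * t') with h | h
      · exact absurd ht2 (ne_of_lt (hgstrict t (2 * t') h (by omega)))
      · exact absurd ht2.symm (ne_of_lt (hgstrict (2 * t') t (by omega) ht))
    have hT0mem : (0 : ℕ) ∈ T := List.mem_of_mem_head? (by rw [hT0]; rfl)
    have hfT : ∀ l ∈ T, f (μ l) = 0 := by
      intro l hl
      apply hfnot
      rintro ⟨t, ht1, rfl⟩
      exact (hWS _ (hgmem _ (by omega))).2 hl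
    have hfz : f z = 0 := by rw [← hμ0]; exact hfT 0 hT0mem
    have hflip : LipschitzWith 1 f := by
      apply LipschitzWith.of_dist_le_mul
      intro x y
      rcases eq_or_ne x y with rfl | hxy
      · simp
      · have h1 : |f x - f y| ≤ α := by
          rcases hf01 x with hx | hx <;> rcases hf01 y with hy | hy <;>
            rw [hx, hy] <;> simp [abs_of_nonneg, abs_of_nonpos, hα.le] <;> linarith
        have h2 : α ≤ dist x y := hsep x y hxy
        rw [Real.dist_eq]
        calc |f x - f y| ≤ α := h1
          _ ≤ dist x y := h2
          _ = 1 * dist x y := by ring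
    -- values along the S chain
    have hSret := chain_retract μ φ hretr hcomm S hS a hSa
    have hga : ∀ t, t < W.length → φ (g t) (μ a) = μ (g t) ∧ g t ≤ a := by
      intro t ht
      exact hSret _ (hWS _ (hgmem t ht)).1
    set c : ℕ → ℝ := fun i => f (φ i (μ a)) with hc
    have hcg : ∀ t, t < W.length → c (g t) = f (μ (g t)) := by
      intro t ht
      rw [hc]
      simp only
      rw [(hga t ht).1]
    -- values along the T chain
    have hTwalk := chain_walk μ φ hretr hcomm T hT b hTb hT0
    have hvzero : ∀ i, f (φ i (μ b)) = 0 := by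
      intro i
      obtain ⟨l, hlT, _, heq⟩ := hTwalk i
      rw [heq]; exact hfT l hlT
    -- signs
    set ε : ℕ → ℝ := fun i => if c (i + 1) - c i < 0 then -1 else 1 with hε
    have hεpm : ∀ i, ε i = 1 ∨ ε i = -1 := by
      intro i
      by_cases h : c (i + 1) - c i < 0
      · right
        show (if c (i + 1) - c i < 0 then (-1 : ℝ) else 1) = -1
        rw [if_pos h]
      · left
        show (if c (i + 1) - c i < 0 then (-1 : ℝ) else 1) = 1
        rw [if_neg h]
    set m : ℕ := max a b with hm
    refine ⟨f, hflip, hfz, m, ε, hεpm, μ a, μ b, ?_, ?_⟩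
    · intro hab
      have h0W : 0 < W.length := by omega
      obtain ⟨l, hlT, _, heq⟩ := hTwalk (g 0)
      have hμeq : μ (g 0) = μ l := by rw [← (hga 0 h0W).1, hab, heq]
      have : g 0 ∈ T := by rw [hμinj hμeq]; exact hlT
      exact (hWS _ (hgmem 0 h0W)).2 this
    · -- main estimate
      have hsv : (∑ i ∈ Finset.range (m + 1), ε i * (f (φ (i + 1) (μ b)) - f (φ i (μ b)))) = 0 := by
        apply Finset.sum_eq_zero
        intro i _
        rw [hvzero, hvzero]
        ring
      have hsu : (∑ i ∈ Finset.range (m + 1), ε i * (f (φ (i + 1) (μ a)) - f (φ i (μ a))))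
          = ∑ i ∈ Finset.range (m + 1), |c (i + 1) - c i| := by
        apply Finset.sum_congr rfl
        intro i _
        have hterm : f (φ (i + 1) (μ a)) - f (φ i (μ a)) = c (i + 1) - c i := rfl
        rw [hterm]
        have hεi : ε i = if c (i + 1) - c i < 0 then (-1 : ℝ) else 1 := rfl
        by_cases h : c (i + 1) - c i < 0
        · rw [hεi, if_pos h, abs_of_neg h]; ring
        · rw [hεi, if_neg h, abs_of_nonneg (not_lt.mp h)]; ring
      -- total variation lower bound
      set p : ℕ → ℕ := fun r => g (min r (n - 1)) with hp
      have hpmono : Monotone p := by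
        intro i j hij
        exact hgmono _ _ (min_le_min_right _ hij) (by
          have := Nat.min_le_right j (n - 1); omega)
      have htv := tv_chain c p hpmono (n - 1)
      have hterm : ∀ t ∈ Finset.range (n - 1), |c (p (t + 1)) - c (p t)| = α := by
        intro t ht
        rw [Finset.mem_range] at ht
        have e1 : p t = g t := by rw [hp]; simp only; rw [Nat.min_eq_left (by omega)]
        have e2 : p (t + 1) = g (t + 1) := by
          rw [hp]; simp only; rw [Nat.min_eq_left (by omega)]
        rw [e1, e2, hcg t (by omega), hcg (t + 1) (by omega)]
        rcases Nat.even_or_odd t with he | ho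
        · rw [hfval_even t (by omega) he,
            hfval_odd (t + 1) (by omega) (by simp [Nat.even_add_one, he])]
          rw [abs_of_nonpos (by linarith)]; ring
        · rw [hfval_odd t (by omega) (by simp [Nat.not_even_iff_odd.mpr ho]),
            hfval_even (t + 1) (by omega) (by simpa [Nat.even_add_one] using ho)]
          rw [abs_of_nonneg (by linarith)]; ring
      have hsum1 : ∑ t ∈ Finset.range (n - 1), |c (p (t + 1)) - c (p t)| = ((n : ℝ) - 1) * α := by
        rw [Finset.sum_congr rfl hterm, Finset.sum_const, nsmul_eq_mul, Finset.card_range]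
        congr 1
        push_cast [Nat.cast_sub (by omega : 1 ≤ n)]
        ring
      have hsub2 : ∑ i ∈ Finset.Ico (p 0) (p (n - 1)), |c (i + 1) - c i|
          ≤ ∑ i ∈ Finset.range (m + 1), |c (i + 1) - c i| := by
        apply Finset.sum_le_sum_of_subset_of_nonneg
        · intro i hi
          rw [Finset.mem_Ico] at hi
          rw [Finset.mem_range]
          have hpa : p (n - 1) ≤ a := by
            rw [hp]; simp only; rw [Nat.min_self]
            exact (hga (n - 1) (by omega)).2
          have : a ≤ m := le_max_left a b
          omega
        · intro i _ _
          positivity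
      have hTV : ((n : ℝ) - 1) * α ≤ ∑ i ∈ Finset.range (m + 1), |c (i + 1) - c i| := by
        rw [← hsum1]
        exact le_trans htv hsub2
      rw [hsu, hsv, sub_zero]
      have hnn : (0 : ℝ) ≤ ∑ i ∈ Finset.range (m + 1), |c (i + 1) - c i| :=
        Finset.sum_nonneg (fun i _ => abs_nonneg _)
      rw [abs_of_nonneg hnn]
      have hfac : 0 ≤ α * ((n : ℝ) - 1) / β := by
        apply div_nonneg _ hβ.le
        apply mul_nonneg hα.le
        have : (2 : ℝ) ≤ (n : ℝ) := by exact_mod_cast h2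
        linarith
      calc α * ((n : ℝ) - 1) / β * dist (μ a) (μ b)
          ≤ α * ((n : ℝ) - 1) / β * β := mul_le_mul_of_nonneg_left hdab hfac
        _ = α * ((n : ℝ) - 1) := by field_simp
        _ = ((n : ℝ) - 1) * α := by ring
        _ ≤ _ := hTV
end

section
/- Linear interpolation on a discrete circle is norm-preserving: Let C_m be the graph circle {x_1,...,x_m} (metric d(x_k,x_l) = min{|k−l|, m−|k−l|}), let D ⊆ C_m be nonempty, and for x ∈ C_m let ν^l(x), ν^r(x) ∈ D be the nearest points of D to the left and right of x (with ν^l(x)=ν^r(x)=x if x ∈ D), and let d^l, d^r be the left/right path distances. Define (Pf)(x) = [d^r(x, ν^r(x)) f(ν^l(x)) + d^l(x, ν^l(x)) f(ν^r(x))] / [d^l(x, ν^l(x)) + d^r(x, ν^r(x))] for x ∉ D and (Pf)(x) = f(x) for x ∈ D. Then for every f : D → ℝ that is Lipschitz with constant L (with respect to d restricted to D), the function Pf : C_m → ℝ is Lipschitz with the same constant L. -/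
/-- Rightward (directed) path distance on the graph circle `ZMod m`. -/
def dR {m : ℕ} [NeZero m] (x y : ZMod m) : ℕ := (y - x).val

/-- Leftward (directed) path distance on the graph circle `ZMod m`. -/
def dL {m : ℕ} [NeZero m] (x y : ZMod m) : ℕ := (x - y).val

/-- The graph-circle metric on `ZMod m`: `d(x,y) = min {d^r(x,y), d^l(x,y)}`. -/
def cdist {m : ℕ} [NeZero m] (x y : ZMod m) : ℝ := (min (dR x y) (dL x y) : ℕ)

/-- The nearest point of `D` to the right of `x` (any minimizer of `d^r(x, ·)` on `D`). -/
noncomputable def nuR {m : ℕ} [NeZero m] (D : Finset (ZMod m)) (x : ZMod m) : ZMod m :=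
  if h : D.Nonempty then (D.exists_min_image (fun a => dR x a) h).choose else x

/-- The nearest point of `D` to the left of `x` (any minimizer of `d^l(x, ·)` on `D`). -/
noncomputable def nuL {m : ℕ} [NeZero m] (D : Finset (ZMod m)) (x : ZMod m) : ZMod m :=
  if h : D.Nonempty then (D.exists_min_image (fun a => dL x a) h).choose else x

/-- Linear interpolation of `f` from `D` to the whole circle:
`(P_D f)(x) = [d^r(x, ν^r x) f(ν^l x) + d^l(x, ν^l x) f(ν^r x)] / [d^l(x, ν^l x) + d^r(x, ν^r x)]`
for `x ∉ D`, and `(P_D f)(x) = f x` for `x ∈ D`. -/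
noncomputable def interp {m : ℕ} [NeZero m] (D : Finset (ZMod m)) (f : ZMod m → ℝ)
    (x : ZMod m) : ℝ :=
  if x ∈ D then f x
  else
    ((dR x (nuR D x) : ℝ) * f (nuL D x) + (dL x (nuL D x) : ℝ) * f (nuR D x)) /
      ((dL x (nuL D x) : ℝ) + (dR x (nuR D x) : ℝ))

section Aux
variable {m : ℕ} [NeZero m] {D : Finset (ZMod m)}

lemma nuR_mem (hD : D.Nonempty) (x : ZMod m) : nuR D x ∈ D := by
  rw [nuR, dif_pos hD]
  exact (D.exists_min_image (fun a => dR x a) hD).choose_spec.1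

lemma nuR_min (hD : D.Nonempty) (x : ZMod m) {a : ZMod m} (ha : a ∈ D) :
    dR x (nuR D x) ≤ dR x a := by
  rw [nuR, dif_pos hD]
  exact (D.exists_min_image (fun a => dR x a) hD).choose_spec.2 a ha

lemma nuL_mem (hD : D.Nonempty) (x : ZMod m) : nuL D x ∈ D := by
  rw [nuL, dif_pos hD]
  exact (D.exists_min_image (fun a => dL x a) hD).choose_spec.1

lemma nuL_min (hD : D.Nonempty) (x : ZMod m) {a : ZMod m} (ha : a ∈ D) :
    dL x (nuL D x) ≤ dL x a := by
  rw [nuL, dif_pos hD]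
  exact (D.exists_min_image (fun a => dL x a) hD).choose_spec.2 a ha

lemma val_cast_self (a : ZMod m) : ((a.val : ℕ) : ZMod m) = a :=
  ZMod.natCast_rightInverse a

lemma dR_inj {x a b : ZMod m} (h : dR x a = dR x b) : a = b := by
  have h2 : a - x = b - x := ZMod.val_injective m h
  exact sub_left_injective h2

lemma dL_inj {x a b : ZMod m} (h : dL x a = dL x b) : a = b := by
  have h2 : x - a = x - b := ZMod.val_injective m h
  exact sub_right_injective h2

lemma dR_pos {x a : ZMod m} (h : a ≠ x) : 1 ≤ dR x a := by
  rw [Nat.one_le_iff_ne_zero]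
  intro h0
  exact h (sub_eq_zero.mp ((ZMod.val_eq_zero _).mp h0))

lemma dL_pos {x a : ZMod m} (h : a ≠ x) : 1 ≤ dL x a := by
  rw [Nat.one_le_iff_ne_zero]
  intro h0
  exact h (sub_eq_zero.mp ((ZMod.val_eq_zero _).mp h0)).symm

lemma one_lt_of_ne {x y : ZMod m} (h : x ≠ y) : 1 < m := by
  rcases Nat.lt_or_ge 1 m with h1 | h1
  · exact h1
  · have hm : m = 1 := le_antisymm h1 (Nat.one_le_iff_ne_zero.mpr (NeZero.ne m))
    subst hm
    exact absurd (Subsingleton.elim x y) h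

lemma val_one_of (hm : 1 < m) : (1 : ZMod m).val = 1 := by
  have h : ((1 : ℕ) : ZMod m).val = 1 % m := ZMod.val_natCast m 1
  simpa [Nat.mod_eq_of_lt hm] using h

lemma dR_succ {x a : ZMod m} (ha : a ≠ x) : dR x a = dR (x + 1) a + 1 := by
  have h1 : 1 ≤ (a - x).val := dR_pos ha
  have hlt : (a - x).val < m := ZMod.val_lt _
  have hax : (((a - x).val : ℕ) : ZMod m) = a - x := val_cast_self _
  have key : a - (x + 1) = (((a - x).val - 1 : ℕ) : ZMod m) := by
    rw [Nat.cast_sub h1, hax]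
    push_cast
    ring
  rw [dR, dR, key, ZMod.val_natCast, Nat.mod_eq_of_lt (by omega)]
  omega

lemma dL_succ {x a : ZMod m} (ha : a ≠ x + 1) : dL (x + 1) a = dL x a + 1 := by
  have hlt : (x - a).val < m := ZMod.val_lt _
  have hax : (((x - a).val : ℕ) : ZMod m) = x - a := val_cast_self _
  have hne : (x - a).val ≠ m - 1 := by
    intro h
    apply ha
    have h1 : x - a = ((m - 1 : ℕ) : ZMod m) := by rw [← h, hax]
    have hm1 : ((m - 1 : ℕ) : ZMod m) = -1 := by
      rw [Nat.cast_sub (Nat.one_le_iff_ne_zero.mpr (NeZero.ne m)), ZMod.natCast_self]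
      push_cast
      ring
    have h2 : x - a = -1 := h1.trans hm1
    have : a = x + 1 := by linear_combination -h2
    exact this
  have key : x + 1 - a = (((x - a).val + 1 : ℕ) : ZMod m) := by
    push_cast
    rw [hax]
    ring
  rw [dL, dL, key, ZMod.val_natCast, Nat.mod_eq_of_lt (by omega)]

lemma key_div {A B den L : ℝ} (hden : 0 < den) (h : |A - B| ≤ L * den) :
    |(A - B) / den| ≤ L := by
  rw [abs_div, abs_of_pos hden, div_le_iff₀ hden]
  exact h

end Aux

section Main
variable {m : ℕ} [NeZero m]

lemma interp_step (D : Finset (ZMod m)) (hD : D.Nonempty)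
    (L : ℝ) (hL : 0 ≤ L) (f : ZMod m → ℝ)
    (hf : ∀ a ∈ D, ∀ b ∈ D, |f a - f b| ≤ L * cdist a b)
    (x : ZMod m) : |interp D f x - interp D f (x + 1)| ≤ L := by
  by_cases hx : x ∈ D <;> by_cases hy : x + 1 ∈ D
  · -- both in D
    rw [interp, if_pos hx, interp, if_pos hy]
    have h := hf x hx (x + 1) hy
    have hc : cdist x (x + 1) ≤ 1 := by
      rw [cdist]
      have h1 : min (dR x (x + 1)) (dL x (x + 1)) ≤ dR x (x + 1) := min_le_left _ _
      have h2 : dR x (x + 1) ≤ 1 := by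
        rw [dR, show x + 1 - x = ((1 : ℕ) : ZMod m) by push_cast; ring, ZMod.val_natCast]
        exact Nat.mod_le 1 m
      exact_mod_cast h1.trans h2
    calc |f x - f (x + 1)| ≤ L * cdist x (x + 1) := h
      _ ≤ L * 1 := mul_le_mul_of_nonneg_left hc hL
      _ = L := mul_one L
  · -- x ∈ D, x+1 ∉ D
    have hm : 1 < m := one_lt_of_ne (show x ≠ x + 1 from fun h => hy (h ▸ hx))
    have hone : (1 : ZMod m).val = 1 := val_one_of hm
    set y := x + 1 with hy'
    have hny : nuL D y ≠ y := fun h => hy (h ▸ nuL_mem hD y)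
    have hdlx : dL y x = 1 := by
      rw [dL, show y - x = 1 by rw [hy']; ring, hone]
    have hd1 : dL y (nuL D y) = 1 :=
      le_antisymm (hdlx ▸ nuL_min hD y hx) (dL_pos hny)
    have hLy : nuL D y = x := by
      apply dL_inj (x := y)
      rw [hd1, hdlx]
    set r := nuR D y with hr'
    have hrD : r ∈ D := nuR_mem hD y
    have hry : r ≠ y := fun h => hy (h ▸ hrD)
    set s := dR y r with hs'
    have hs1 : 1 ≤ s := dR_pos hry
    rw [interp, if_pos hx, interp, if_neg hy, ← hr', ← hs', hLy, hdlx]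
    have hden : (0 : ℝ) < (1 : ℕ) + (s : ℝ) := by positivity
    have heq : f x - ((s : ℝ) * f x + ((1 : ℕ) : ℝ) * f r) / (((1 : ℕ) : ℝ) + (s : ℝ))
        = (f x - f r) / (((1 : ℕ) : ℝ) + (s : ℝ)) := by
      field_simp
      ring
    rw [heq]
    apply key_div hden
    have hdxr : dR x r ≤ 1 + s := by
      rw [dR, show r - x = 1 + (r - y) by rw [hy']; ring]
      calc (1 + (r - y)).val ≤ (1 : ZMod m).val + (r - y).val := ZMod.val_add_le _ _
        _ = 1 + s := by rw [hone, hs', dR]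
    have hc : cdist x r ≤ ((1 + s : ℕ) : ℝ) := by
      rw [cdist]
      exact_mod_cast (min_le_left _ _).trans hdxr
    calc |f x - f r| ≤ L * cdist x r := hf x hx r hrD
      _ ≤ L * ((1 + s : ℕ) : ℝ) := mul_le_mul_of_nonneg_left hc hL
      _ = L * (((1 : ℕ) : ℝ) + (s : ℝ)) := by push_cast; ring
  · -- x ∉ D, x+1 ∈ D
    have hm : 1 < m := one_lt_of_ne (show x ≠ x + 1 from fun h => hx (h.symm ▸ hy))
    have hone : (1 : ZMod m).val = 1 := val_one_of hm
    have hnx : nuR D x ≠ x := fun h => hx (h ▸ nuR_mem hD x)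
    have hdrx : dR x (x + 1) = 1 := by
      rw [dR, show x + 1 - x = 1 by ring, hone]
    have hd1 : dR x (nuR D x) = 1 :=
      le_antisymm (hdrx ▸ nuR_min hD x hy) (dR_pos hnx)
    have hRx : nuR D x = x + 1 := by
      apply dR_inj (x := x)
      rw [hd1, hdrx]
    set l := nuL D x with hl'
    have hlD : l ∈ D := nuL_mem hD x
    have hlx : l ≠ x := fun h => hx (h ▸ hlD)
    set t := dL x l with ht'
    have ht1 : 1 ≤ t := dL_pos hlx
    rw [interp, if_neg hx, interp, if_pos hy, ← hl', ← ht', hRx, hdrx]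
    have hden : (0 : ℝ) < (t : ℝ) + ((1 : ℕ) : ℝ) := by positivity
    have heq : (((1 : ℕ) : ℝ) * f l + (t : ℝ) * f (x + 1)) / ((t : ℝ) + ((1 : ℕ) : ℝ))
        - f (x + 1) = (f l - f (x + 1)) / ((t : ℝ) + ((1 : ℕ) : ℝ)) := by
      field_simp
      ring
    rw [heq]
    apply key_div hden
    have hdly : dR l (x + 1) ≤ t + 1 := by
      rw [dR, show x + 1 - l = (x - l) + 1 by ring]
      calc ((x - l) + 1).val ≤ (x - l).val + (1 : ZMod m).val := ZMod.val_add_le _ _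
        _ = t + 1 := by rw [hone, ht', dL]
    have hc : cdist l (x + 1) ≤ ((t + 1 : ℕ) : ℝ) := by
      rw [cdist]
      exact_mod_cast (min_le_left _ _).trans hdly
    calc |f l - f (x + 1)| ≤ L * cdist l (x + 1) := hf l hlD (x + 1) hy
      _ ≤ L * ((t + 1 : ℕ) : ℝ) := mul_le_mul_of_nonneg_left hc hL
      _ = L * ((t : ℝ) + ((1 : ℕ) : ℝ)) := by push_cast; ring
  · -- neither in D
    set y := x + 1 with hy'
    set l := nuL D x with hl'
    set r := nuR D x with hr'
    have hlD : l ∈ D := nuL_mem hD x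
    have hrD : r ∈ D := nuR_mem hD x
    have hlx : l ≠ x := fun h => hx (h ▸ hlD)
    have hrx : r ≠ x := fun h => hx (h ▸ hrD)
    have hly : l ≠ y := fun h => hy (h ▸ hlD)
    have hry : r ≠ y := fun h => hy (h ▸ hrD)
    set t := dL x l with ht'
    set s := dR x r with hs'
    have ht1 : 1 ≤ t := dL_pos hlx
    have hs1 : 1 ≤ s := dR_pos hrx
    have hLy : nuL D y = l := by
      have hny : nuL D y ≠ y := fun h => hy (h ▸ nuL_mem hD y)
      have h1 : dL y (nuL D y) ≤ dL y l := nuL_min hD y hlD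
      have h2 : dL y l = t + 1 := by rw [ht']; exact dL_succ hly
      have h3 : dL y (nuL D y) = dL x (nuL D y) + 1 := dL_succ hny
      have h4 : t ≤ dL x (nuL D y) := nuL_min hD x (nuL_mem hD y)
      exact dL_inj (x := y) (by omega)
    have hRy : nuR D y = r := by
      have hny : nuR D y ≠ x := fun h => hx (h ▸ nuR_mem hD y)
      have h1 : dR y (nuR D y) ≤ dR y r := nuR_min hD y hrD
      have h2 : dR x (nuR D y) = dR y (nuR D y) + 1 := dR_succ hny
      have h3 : dR x r = dR y r + 1 := dR_succ hrx
      have h4 : s ≤ dR x (nuR D y) := nuR_min hD x (nuR_mem hD y)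
      exact dR_inj (x := y) (by omega)
    set s' := dR y r with hs''
    have hss : s = s' + 1 := by rw [hs', hs'']; exact dR_succ hrx
    have hdLy : dL y l = t + 1 := by rw [ht']; exact dL_succ hly
    rw [interp, if_neg hx, interp, if_neg hy, ← hl', ← hr', hLy, hRy, ← ht', ← hs',
      ← hs'', hdLy, hss]
    have hden : (0 : ℝ) < (t : ℝ) + ((s' + 1 : ℕ) : ℝ) := by positivity
    have hden2 : ((t + 1 : ℕ) : ℝ) + (s' : ℝ) = (t : ℝ) + ((s' + 1 : ℕ) : ℝ) := by
      push_cast; ring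
    have heq : (((s' + 1 : ℕ) : ℝ) * f l + (t : ℝ) * f r) / ((t : ℝ) + ((s' + 1 : ℕ) : ℝ))
        - ((s' : ℝ) * f l + ((t + 1 : ℕ) : ℝ) * f r) / (((t + 1 : ℕ) : ℝ) + (s' : ℝ))
        = (f l - f r) / ((t : ℝ) + ((s' + 1 : ℕ) : ℝ)) := by
      rw [hden2]
      have h0 : (t : ℝ) + ((s' + 1 : ℕ) : ℝ) ≠ 0 := ne_of_gt hden
      field_simp
      push_cast
      ring
    rw [heq]
    apply key_div hden
    have hdlr : dR l r ≤ s + t := by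
      rw [dR, show r - l = (r - x) + (x - l) by ring]
      calc ((r - x) + (x - l)).val ≤ (r - x).val + (x - l).val := ZMod.val_add_le _ _
        _ = s + t := by rw [hs', ht', dR, dL]
    have hc : cdist l r ≤ ((s + t : ℕ) : ℝ) := by
      rw [cdist]
      exact_mod_cast (min_le_left _ _).trans hdlr
    calc |f l - f r| ≤ L * cdist l r := hf l hlD r hrD
      _ ≤ L * ((s + t : ℕ) : ℝ) := mul_le_mul_of_nonneg_left hc hL
      _ = L * ((t : ℝ) + ((s' + 1 : ℕ) : ℝ)) := by rw [hss]; push_cast; ring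

lemma interp_chain (D : Finset (ZMod m)) (hD : D.Nonempty)
    (L : ℝ) (hL : 0 ≤ L) (f : ZMod m → ℝ)
    (hf : ∀ a ∈ D, ∀ b ∈ D, |f a - f b| ≤ L * cdist a b) :
    ∀ (k : ℕ) (x : ZMod m), |interp D f x - interp D f (x + (k : ZMod m))| ≤ L * k := by
  intro k
  induction k with
  | zero => intro x; simp
  | succ n ih =>
    intro x
    have h1 := ih x
    have h2 := interp_step D hD L hL f hf (x + (n : ZMod m))
    have h3 : x + ((n + 1 : ℕ) : ZMod m) = (x + (n : ZMod m)) + 1 := by push_cast; ring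
    rw [h3]
    push_cast
    calc |interp D f x - interp D f (x + (n : ZMod m) + 1)|
        ≤ |interp D f x - interp D f (x + (n : ZMod m))|
          + |interp D f (x + (n : ZMod m)) - interp D f (x + (n : ZMod m) + 1)| :=
          abs_sub_le _ _ _
      _ ≤ L * n + L := add_le_add h1 h2
      _ = L * (n + 1) := by ring

end Main

/-- linear interpolation on a discrete circle preserves the Lipschitz
constant: if `f` is `L`-Lipschitz on `D ⊆ C_m`, then `interp D f` is `L`-Lipschitz
on all of `C_m`. -/


theorem interp_lipschitz {m : ℕ} [NeZero m] (D : Finset (ZMod m)) (hD : D.Nonempty)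
    (L : ℝ) (hL : 0 ≤ L) (f : ZMod m → ℝ)
    (hf : ∀ a ∈ D, ∀ b ∈ D, |f a - f b| ≤ L * cdist a b) :
    ∀ x y : ZMod m, |interp D f x - interp D f y| ≤ L * cdist x y := by
  intro x y
  have hR : |interp D f x - interp D f y| ≤ L * (dR x y : ℝ) := by
    have h := interp_chain D hD L hL f hf (dR x y) x
    have hx : x + ((dR x y : ℕ) : ZMod m) = y := by
      rw [dR, val_cast_self]; ring
    rwa [hx] at h
  have hL2 : |interp D f x - interp D f y| ≤ L * (dL x y : ℝ) := by
    have h := interp_chain D hD L hL f hf (dL x y) y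
    have hx : y + ((dL x y : ℕ) : ZMod m) = x := by
      rw [dL, val_cast_self]; ring
    rw [hx, abs_sub_comm] at h
    exact h
  rw [cdist]
  rcases le_total (dR x y) (dL x y) with h | h
  · rw [min_eq_left h]; exact hR
  · rw [min_eq_right h]; exact hL2
end
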